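/- arXiv:1106.5575 — 6 statements merged into one kernel-verified Lean document; each statement's English description precedes it below -/
import Mathlib

section
/- For every ε > 0 the function x ↦ (x − iε)^{−2} is (absolutely) integrable on ℝ, and for every k ∈ ℝ: ∫_ℝ e^{−ikx} (x − iε)^{−2} dx = 2π k e^{εk} if k ≤ 0, and = 0 if k > 0. -/
open MeasureTheory Complex Set Filter Topology
open scoped FourierTransform

lemma key_int (c : ℂ) (hc : 0 < c.re) :
    IntegrableOn (fun t : ℝ => (t:ℂ) * Complex.exp (-c * t)) (Ioi 0) := by
  have h2 : (0:ℝ) < c.re / 2 := by linarith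
  refine Integrable.mono' ((exp_neg_integrableOn_Ioi 0 h2).const_mul (2 / c.re)) ?_ ?_
  · exact (Complex.continuous_ofReal.mul
      (Complex.continuous_exp.comp (by continuity))).aestronglyMeasurable.restrict
  · filter_upwards [ae_restrict_mem measurableSet_Ioi] with t ht
    have ht0 : (0:ℝ) < t := ht
    have hre : (-c * (t:ℂ)).re = -c.re * t := by simp [Complex.mul_re]
    rw [norm_mul, Complex.norm_exp, hre,
      Complex.norm_real, Real.norm_eq_abs, abs_of_pos ht0]
    have h1 : t ≤ 2 / c.re * Real.exp (c.re / 2 * t) := by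
      rw [div_mul_eq_mul_div, le_div_iff₀ hc]
      nlinarith [Real.add_one_le_exp (c.re / 2 * t)]
    calc t * Real.exp (-c.re * t)
        ≤ 2 / c.re * Real.exp (c.re / 2 * t) * Real.exp (-c.re * t) :=
          mul_le_mul_of_nonneg_right h1 (Real.exp_pos _).le
      _ = 2 / c.re * Real.exp (-(c.re / 2) * t) := by
          rw [mul_assoc, ← Real.exp_add]; ring_nf

lemma key_val (c : ℂ) (hc : 0 < c.re) :
    ∫ t in Ioi (0:ℝ), (t:ℂ) * Complex.exp (-c * t) = 1 / c ^ 2 := by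
  have hcne : c ≠ 0 := fun h => by simp [h] at hc
  set F : ℝ → ℂ := fun t => -((t / c) + 1 / c ^ 2) * Complex.exp (-c * t) with hF
  have hderiv : ∀ t : ℝ, HasDerivAt F ((t:ℂ) * Complex.exp (-c * t)) t := by
    intro t
    have h1 : HasDerivAt (fun z : ℂ => -((z / c) + 1 / c ^ 2)) (-(1/c)) (t:ℂ) :=
      (((hasDerivAt_id _).div_const c).add_const _).neg
    have h2 : HasDerivAt (fun z : ℂ => Complex.exp (-c * z)) (Complex.exp (-c * t) * -c) (t:ℂ) := by
      simpa using ((hasDerivAt_id ((t:ℝ):ℂ)).const_mul (-c)).cexp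
    have := (h1.mul h2).comp_ofReal
    convert this using 1
    · rfl
    · field_simp
      ring
  have hA : Tendsto (fun t : ℝ => t * Real.exp (-c.re * t)) atTop (𝓝 0) := by
    have h0 := (Real.tendsto_pow_mul_exp_neg_atTop_nhds_zero 1).comp
      (tendsto_id.const_mul_atTop hc)
    have h1 := h0.const_mul (1 / c.re)
    rw [mul_zero] at h1
    refine h1.congr fun t => ?_
    simp only [Function.comp_apply, pow_one, id_eq]
    field_simp
  have hB : Tendsto (fun t : ℝ => Real.exp (-c.re * t)) atTop (𝓝 0) := by
    have := Real.tendsto_exp_neg_atTop_nhds_zero.comp (tendsto_id.const_mul_atTop hc)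
    refine this.congr fun t => ?_
    simp [Function.comp_apply, neg_mul]
  have htend : Tendsto F atTop (𝓝 0) := by
    rw [tendsto_zero_iff_norm_tendsto_zero]
    have hb : Tendsto (fun t : ℝ => ‖(1:ℂ)/c‖ * (t * Real.exp (-c.re * t)) +
        ‖(1:ℂ)/c^2‖ * Real.exp (-c.re * t)) atTop (𝓝 0) := by
      have := (hA.const_mul ‖(1:ℂ)/c‖).add (hB.const_mul ‖(1:ℂ)/c^2‖)
      simpa using this
    refine squeeze_zero' (Eventually.of_forall fun t => norm_nonneg _) ?_ hb
    filter_upwards [eventually_ge_atTop (0:ℝ)] with t ht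
    have hre : (-c * (t:ℂ)).re = -c.re * t := by simp [Complex.mul_re]
    rw [hF]
    simp only [norm_mul, norm_neg, Complex.norm_exp, hre]
    have hnorm : ‖(t:ℂ) / c + 1 / c ^ 2‖ ≤ ‖(1:ℂ)/c‖ * t + ‖(1:ℂ)/c^2‖ := by
      refine (norm_add_le _ _).trans ?_
      gcongr
      rw [norm_div, norm_div, Complex.norm_real, Real.norm_eq_abs, _root_.abs_of_nonneg ht,
        norm_one]
      rw [one_div, inv_mul_eq_div]
    calc ‖(t:ℂ) / c + 1 / c ^ 2‖ * Real.exp (-c.re * t)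
        ≤ (‖(1:ℂ)/c‖ * t + ‖(1:ℂ)/c^2‖) * Real.exp (-c.re * t) :=
          mul_le_mul_of_nonneg_right hnorm (Real.exp_pos _).le
      _ = ‖(1:ℂ)/c‖ * (t * Real.exp (-c.re * t)) + ‖(1:ℂ)/c^2‖ * Real.exp (-c.re * t) := by ring
  have := integral_Ioi_of_hasDerivAt_of_tendsto
    (hderiv 0).continuousAt.continuousWithinAt (fun t _ => hderiv t) (key_int c hc) htend
  rw [this, hF]
  simp

lemma f_integrable (ε : ℝ) (hε : 0 < ε) :
    Integrable (fun x : ℝ => (((x : ℂ) - ε * Complex.I) ^ 2)⁻¹) := by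
  have hne : ∀ x : ℝ, ((x:ℂ) - ε * Complex.I) ≠ 0 := by
    intro x h
    have := congrArg Complex.im h
    simp at this
    linarith
  have hcont : Continuous (fun x : ℝ => (((x : ℂ) - ε * Complex.I) ^ 2)⁻¹) :=
    Continuous.inv₀ (by continuity) fun x => pow_ne_zero 2 (hne x)
  have hbase : Integrable (fun x : ℝ => ε⁻¹ * ε⁻¹ * (1 + (x / ε) ^ 2)⁻¹) :=
    (integrable_inv_one_add_sq.comp_div hε.ne').const_mul _
  refine Integrable.mono' hbase hcont.aestronglyMeasurable (Eventually.of_forall fun x => ?_)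
  have hnorm : ‖(((x : ℂ) - ε * Complex.I) ^ 2)⁻¹‖ = (x^2 + ε^2)⁻¹ := by
    rw [norm_inv, norm_pow, Complex.sq_norm, Complex.normSq_apply]
    simp
    ring
  have heq : (x^2 + ε^2)⁻¹ = ε⁻¹ * ε⁻¹ * (1 + (x / ε) ^ 2)⁻¹ := by
    field_simp
    ring
  rw [hnorm, heq]

/-- For `ε > 0` the function `x ↦ (x − iε)⁻²` is integrable on `ℝ`, and its
Fourier transform is `∫ e^{−ikx}(x − iε)⁻² dx = 2πk e^{εk}` for `k ≤ 0` and
`0` for `k > 0`. -/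
theorem fourier_transform_inv_sq_shifted (ε : ℝ) (hε : 0 < ε) :
    Integrable (fun x : ℝ => (((x : ℂ) - ε * Complex.I) ^ 2)⁻¹) ∧
    ∀ k : ℝ,
      (∫ x : ℝ, Complex.exp (-Complex.I * k * x) * (((x : ℂ) - ε * Complex.I) ^ 2)⁻¹) =
        if k ≤ 0 then 2 * Real.pi * k * Real.exp (ε * k) else 0 := by
  refine ⟨f_integrable ε hε, fun k => ?_⟩
  set π := Real.pi
  have hπ : (0:ℝ) < π := Real.pi_pos
  set f : ℝ → ℂ := fun x => (((x : ℂ) - ε * Complex.I) ^ 2)⁻¹ with hf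
  set G : ℝ → ℝ := fun ξ => -4*π^2 * max ξ 0 * Real.exp (-(2*π*ε)*ξ) with hG
  set g : ℝ → ℂ := fun ξ => ((G ξ : ℝ) : ℂ) with hg
  have hgcont : Continuous g := Complex.continuous_ofReal.comp (by fun_prop)
  have hgind : ∀ ξ : ℝ, g ξ = Set.indicator (Ioi (0:ℝ))
      (fun v => (-4*(π:ℂ)^2) * ((v:ℂ) * Complex.exp (-(2*π*ε : ℂ) * v))) ξ := by
    intro ξ
    by_cases hξ : ξ ∈ Ioi (0:ℝ)
    · rw [Set.indicator_of_mem hξ, hg, hG]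
      have hmax : max ξ 0 = ξ := max_eq_left (le_of_lt hξ)
      push_cast [hmax]
      ring
    · rw [Set.indicator_of_notMem hξ, hg, hG]
      have : max ξ 0 = 0 := max_eq_right (by simpa using hξ)
      simp [this]
  have hg_int : Integrable g := by
    have h1 : IntegrableOn (fun v : ℝ => (-4*(π:ℂ)^2) *
        ((v:ℂ) * Complex.exp (-(2*π*ε : ℂ) * v))) (Ioi 0) := by
      refine (key_int (2*π*ε : ℂ) ?_).const_mul _
      norm_num
      positivity
    have hgeq : g = Set.indicator (Ioi (0:ℝ))
        (fun v => (-4*(π:ℂ)^2) * ((v:ℂ) * Complex.exp (-(2*π*ε : ℂ) * v))) := funext hgind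
    rw [hgeq]
    exact (integrable_indicator_iff measurableSet_Ioi).2 h1
  have hFg : ∀ x : ℝ, 𝓕 g x = f x := by
    intro x
    rw [Real.fourier_real_eq_integral_exp_smul]
    set c : ℂ := 2*π*(ε + Complex.I * x) with hc
    have hcre : 0 < c.re := by
      rw [hc]
      simp [Complex.mul_re]
      positivity
    have hint : ∀ v : ℝ, Complex.exp (↑(-2 * π * v * x) * Complex.I) • g v =
        Set.indicator (Ioi (0:ℝ)) (fun v => (-4*(π:ℂ)^2) *
          ((v:ℂ) * Complex.exp (-c * v))) v := by
      intro v
      rw [smul_eq_mul, hgind v]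
      by_cases hv : v ∈ Ioi (0:ℝ)
      · rw [Set.indicator_of_mem hv, Set.indicator_of_mem hv,
          show (-c * (v:ℂ)) = (↑(-2 * π * v * x) * Complex.I) + (-(2*(π:ℂ)*ε) * v) from by
            rw [hc]; push_cast; ring, Complex.exp_add]
        ring
      · rw [Set.indicator_of_notMem hv, Set.indicator_of_notMem hv, mul_zero]
    rw [integral_congr_ae (Eventually.of_forall hint), integral_indicator measurableSet_Ioi,
      MeasureTheory.integral_const_mul, key_val c hcre]
    rw [hf, hc]
    have hne : ((x:ℂ) - ε * Complex.I) ≠ 0 := by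
      intro h
      have := congrArg Complex.im h
      simp at this
      linarith
    have hne2 : ((ε:ℂ) + Complex.I * x) ≠ 0 := by
      intro h
      have := congrArg Complex.re h
      simp at this
      linarith
    have hπc : (π:ℂ) ≠ 0 := by exact_mod_cast hπ.ne'
    field_simp
    linear_combination (-4*((x:ℂ)^2+(ε:ℂ)^2)) * Complex.I_sq
  have hFg' : 𝓕 g = f := funext hFg
  have hinv : 𝓕⁻ f = g := by
    rw [← hFg']
    exact hgcont.fourierInv_fourier_eq hg_int (hFg' ▸ f_integrable ε hε)
  have hval := congrFun hinv (-(k/(2*π)))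
  rw [Real.fourierInv_eq_fourier_neg, neg_neg,
    Real.fourier_real_eq_integral_exp_smul] at hval
  have hexp : ∀ v : ℝ, Complex.exp (↑(-2 * π * v * (k/(2*π))) * Complex.I) • f v =
      Complex.exp (-Complex.I * k * v) * f v := by
    intro v
    rw [smul_eq_mul]
    congr 2
    have hπc : (π:ℂ) ≠ 0 := by exact_mod_cast hπ.ne'
    push_cast
    field_simp
  rw [integral_congr_ae (Eventually.of_forall hexp)] at hval
  rw [hval]
  simp only [hg, hG]
  by_cases hk : k ≤ 0
  · rw [if_pos hk]
    have hmax : max (-(k/(2*π))) 0 = -(k/(2*π)) := max_eq_left (by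
      rw [neg_nonneg]
      exact div_nonpos_of_nonpos_of_nonneg hk (by positivity))
    have h2 : -(2*π*ε)*(-(k/(2*π))) = ε * k := by field_simp
    have hR : -4*π^2 * max (-(k/(2*π))) 0 * Real.exp (-(2*π*ε)*(-(k/(2*π)))) =
        2*π*k*Real.exp (ε*k) := by
      rw [hmax, h2]
      field_simp
      ring
    rw [hR]
  · rw [if_neg hk]
    have hk' : 0 < k := lt_of_not_ge hk
    have hmax : max (-(k/(2*π))) 0 = 0 := max_eq_right (by
      rw [neg_nonpos]
      exact div_nonneg hk'.le (by positivity))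
    rw [hmax]
    simp
end

section
/- Let f, h : ℝ → ℂ be Schwartz functions and let ε > 0. Then ∫_ℝ ∫_ℝ f(u) h(u') (u − u' − iε)^{−2} du' du = ∫_{−∞}^{0} k e^{εk} f̂(−k) ĥ(k) dk. -/
open MeasureTheory Complex

/-- The Fourier transform `f̂(k) = ∫ f(u) e^{−iku} du` of an (integrable)
function `f : ℝ → ℂ`. -/
noncomputable def ft (f : ℝ → ℂ) (k : ℝ) : ℂ :=
  ∫ u : ℝ, f u * Complex.exp (-Complex.I * k * u)

section Aux
open Set Filter Topology

lemma tendsto_mul_exp_neg {b : ℝ} (hb : 0 < b) :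
    Tendsto (fun t : ℝ => t * Real.exp (-b * t)) atTop (𝓝 0) := by
  refine (tendsto_rpow_mul_exp_neg_mul_atTop_nhds_zero 1 b hb).congr' ?_
  filter_upwards [eventually_gt_atTop (0:ℝ)] with x hx
  rw [Real.rpow_one]

lemma integrableOn_mul_exp_neg {b : ℝ} (hb : 0 < b) :
    IntegrableOn (fun t : ℝ => t * Real.exp (-b * t)) (Ioi 0) := by
  apply integrable_of_isBigO_exp_neg (half_pos hb)
    (Continuous.continuousOn (by continuity))
  rw [Asymptotics.isBigO_iff]
  refine ⟨1, ?_⟩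
  have h2 := Metric.tendsto_nhds.mp (tendsto_mul_exp_neg (half_pos hb)) 1 one_pos
  filter_upwards [eventually_ge_atTop (0:ℝ), h2] with t ht h1t
  rw [Real.dist_eq, sub_zero] at h1t
  have : -b * t = -(b/2) * t + -(b/2) * t := by ring
  rw [this, Real.exp_add]
  have h3 : ‖t * (Real.exp (-(b/2)*t) * Real.exp (-(b/2)*t))‖
      = |t * Real.exp (-(b/2)*t)| * Real.exp (-(b/2)*t) := by
    rw [Real.norm_eq_abs, ← mul_assoc, abs_mul, abs_of_pos (Real.exp_pos _)]
  rw [h3]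
  have h4 : ‖Real.exp (-(b/2) * t)‖ = Real.exp (-(b/2)*t) := by
    rw [Real.norm_eq_abs, abs_of_pos (Real.exp_pos _)]
  rw [h4, one_mul]
  exact mul_le_of_le_one_left (Real.exp_pos _).le h1t.le
end Aux

section Aux2
open Set Filter Topology

lemma integrableOn_cmul_exp {s : ℂ} (hs : 0 < s.re) :
    IntegrableOn (fun t : ℝ => (t : ℂ) * Complex.exp (-(t * s))) (Ioi 0) := by
  apply Integrable.mono' (integrableOn_mul_exp_neg hs)
  · exact (Continuous.aestronglyMeasurable (by continuity)).restrict
  · filter_upwards [ae_restrict_mem measurableSet_Ioi] with t ht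
    simp only [norm_mul, Complex.norm_real, Real.norm_eq_abs, Complex.norm_exp]
    have h1 : (-(↑t * s)).re = -s.re * t := by simp [Complex.mul_re]; ring
    rw [h1, abs_of_pos ht]

lemma ker_Ioi {s : ℂ} (hs : 0 < s.re) :
    ∫ t : ℝ in Ioi 0, (t : ℂ) * Complex.exp (-(t * s)) = (s ^ 2)⁻¹ := by
  have hs0 : s ≠ 0 := fun h => by simp [h] at hs
  have hderiv : ∀ x ∈ Ici (0:ℝ), HasDerivAt
      (fun t : ℝ => -((t : ℂ) / s + 1 / s ^ 2) * Complex.exp (-(t * s)))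
      ((x : ℂ) * Complex.exp (-(x * s))) x := by
    intro x _
    have h1 : HasDerivAt (fun z : ℂ => -(z / s + 1 / s ^ 2) * Complex.exp (-(z * s)))
        ((-(1/s)) * Complex.exp (-(x * s))
          + -((x:ℂ) / s + 1 / s ^ 2) * (Complex.exp (-((x:ℂ) * s)) * (-s))) x := by
      have ha : HasDerivAt (fun z : ℂ => -(z / s + 1 / s ^ 2)) (-(1/s)) x := by
        have h := (((hasDerivAt_id (x:ℂ)).div_const s).add_const (1/s^2)).neg
        exact h
      have hb : HasDerivAt (fun z : ℂ => Complex.exp (-(z * s)))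
          (Complex.exp (-((x:ℂ) * s)) * (-s)) x := by
        simpa using (((hasDerivAt_id (x:ℂ)).mul_const s).neg).cexp
      exact ha.mul hb
    have h2 := h1.comp_ofReal
    convert h2 using 1
    field_simp
    ring
  have htend : Tendsto (fun t : ℝ => -((t : ℂ) / s + 1 / s ^ 2) * Complex.exp (-(t * s)))
      atTop (𝓝 0) := by
    refine squeeze_zero_norm'
      (a := fun t => 1/‖s‖ * (t * Real.exp (-s.re * t)) + ‖1/s^2‖ * Real.exp (-s.re * t)) ?_ ?_
    · filter_upwards [eventually_ge_atTop (0:ℝ)] with t ht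
      show ‖_‖ ≤ (1/‖s‖) * (t * Real.exp (-s.re * t)) + ‖1/s^2‖ * Real.exp (-s.re * t)
      rw [norm_mul]
      have hexp : ‖Complex.exp (-(↑t * s))‖ = Real.exp (-s.re * t) := by
        rw [Complex.norm_exp]
        congr 1
        simp [Complex.mul_re]; ring
      rw [hexp]
      have : ‖-((t : ℂ) / s + 1 / s ^ 2)‖ ≤ t / ‖s‖ + ‖1/s^2‖ := by
        rw [norm_neg]
        refine (norm_add_le _ _).trans ?_
        gcongr
        rw [norm_div, Complex.norm_real, Real.norm_eq_abs, _root_.abs_of_nonneg ht]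
      calc ‖-((t : ℂ) / s + 1 / s ^ 2)‖ * Real.exp (-s.re * t)
          ≤ (t / ‖s‖ + ‖1/s^2‖) * Real.exp (-s.re * t) :=
            mul_le_mul_of_nonneg_right this (Real.exp_pos _).le
        _ = 1/‖s‖ * (t * Real.exp (-s.re * t)) + ‖1/s^2‖ * Real.exp (-s.re * t) := by ring
    · have l1 := (tendsto_mul_exp_neg hs).const_mul (1/‖s‖)
      have l2 : Tendsto (fun t : ℝ => Real.exp (-s.re * t)) atTop (𝓝 0) := by
        apply Real.tendsto_exp_atBot.comp
        exact (tendsto_id.const_mul_atTop_of_neg (by linarith)).comp tendsto_id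
      have := l1.add (l2.const_mul ‖1/s^2‖)
      simpa using this
  have := integral_Ioi_of_hasDerivAt_of_tendsto' hderiv (integrableOn_cmul_exp hs) htend
  rw [this]
  push_cast
  field_simp
  simp

lemma integrableOn_ker_Iio {s : ℂ} (hs : 0 < s.re) :
    IntegrableOn (fun k : ℝ => (k : ℂ) * Complex.exp (k * s)) (Iio 0) := by
  have h : IntegrableOn (fun t : ℝ => -((t : ℂ) * Complex.exp (-(t * s)))) (Ioi 0) volume :=
    (integrableOn_cmul_exp hs).neg
  rw [← MeasurePreserving.integrableOn_comp_preimage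
    (Measure.measurePreserving_neg (volume : Measure ℝ))
    (Homeomorph.neg ℝ).measurableEmbedding]
  have hset : (Neg.neg ⁻¹' Iio 0 : Set ℝ) = Ioi 0 := by ext x; simp
  rw [hset]
  apply h.congr_fun ?_ measurableSet_Ioi
  intro t _
  show -((t:ℂ) * Complex.exp (-(t*s))) = ((-t : ℝ) : ℂ) * Complex.exp ((-t : ℝ) * s)
  push_cast
  ring_nf

lemma ker_Iio {s : ℂ} (hs : 0 < s.re) :
    ∫ k : ℝ in Iio 0, (k : ℂ) * Complex.exp (k * s) = -(s ^ 2)⁻¹ := by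
  rw [← integral_Iic_eq_integral_Iio]
  have := integral_comp_neg_Ioi (0:ℝ) (fun k : ℝ => (k : ℂ) * Complex.exp (k * s))
  rw [neg_zero] at this
  rw [← this]
  have : ∀ x : ℝ, ((-x : ℝ) : ℂ) * Complex.exp ((-x:ℝ) * s)
      = -((x:ℂ) * Complex.exp (-(x * s))) := by
    intro x; push_cast; ring_nf
  simp_rw [this, integral_neg, ker_Ioi hs]
end Aux2

open Set Filter Topology in
/-- Fourier-space rewriting of the regularized boundary two-point function:
for Schwartz `f, h` and `ε > 0`,
`∬ f(u) h(u') (u − u' − iε)⁻² du' du = ∫_{−∞}^0 k e^{εk} f̂(−k) ĥ(k) dk`. -/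
theorem regularized_two_point_mode_expansion (f h : SchwartzMap ℝ ℂ) (ε : ℝ) (hε : 0 < ε) :
    (∫ u : ℝ, ∫ u' : ℝ, f u * h u' * (((u : ℂ) - (u' : ℂ) - ε * Complex.I) ^ 2)⁻¹) =
      ∫ k in Set.Iio (0 : ℝ),
        (k : ℂ) * Real.exp (ε * k) * ft (fun u => f u) (-k) * ft (fun u => h u) k := by
  set ν : Measure (ℝ × ℝ) := (volume : Measure ℝ).prod (volume : Measure ℝ) with hν
  set Φ : ℝ → ℝ × ℝ → ℂ := fun k p =>
    f p.1 * h p.2 * ((k : ℂ) * Complex.exp (k * ((ε : ℂ) + Complex.I * (p.1 - p.2)))) with hΦdef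
  have hre : ∀ p : ℝ × ℝ, (0:ℝ) < ((ε : ℂ) + Complex.I * ((p.1 : ℂ) - p.2)).re := by
    intro p; simp [hε]
  -- step 1 : pointwise rewriting of the k-integrand
  have hstep1 : ∀ k : ℝ,
      (k : ℂ) * Real.exp (ε * k) * ft (fun u => f u) (-k) * ft (fun u => h u) k
        = ∫ p : ℝ × ℝ, Φ k p ∂ν := by
    intro k
    rw [ft, ft, show ((k : ℂ) * Real.exp (ε * k)
        * (∫ u : ℝ, f u * Complex.exp (-I * (-k : ℝ) * u))
        * (∫ u : ℝ, h u * Complex.exp (-I * (k : ℝ) * u)))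
      = ((k : ℂ) * Real.exp (ε * k))
        * ((∫ u : ℝ, f u * Complex.exp (-I * (-k : ℝ) * u))
          * (∫ u : ℝ, h u * Complex.exp (-I * (k : ℝ) * u))) from by ring,
      ← integral_prod_mul, ← integral_const_mul]
    refine integral_congr_ae (Eventually.of_forall fun p => ?_)
    simp only [hΦdef]
    rw [Complex.ofReal_exp]
    have hexp : Complex.exp (ε * k : ℝ) * (Complex.exp (-I * (-k : ℝ) * p.1)
        * Complex.exp (-I * (k : ℝ) * p.2))
        = Complex.exp (k * ((ε : ℂ) + Complex.I * ((p.1 : ℂ) - p.2))) := by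
      rw [← Complex.exp_add, ← Complex.exp_add]
      congr 1
      push_cast
      ring
    linear_combination ((k : ℂ) * f p.1 * h p.2) * hexp
  -- integrability for Fubini
  have hΦint : Integrable (Function.uncurry Φ) (((volume : Measure ℝ).restrict (Iio 0)).prod ν) := by
    have hw : Integrable (fun k : ℝ => ‖(k : ℂ) * Complex.exp (k * (ε : ℂ))‖)
        ((volume : Measure ℝ).restrict (Iio 0)) := by
      refine (integrableOn_ker_Iio (s := (ε : ℂ)) ?_).norm
      simpa using hε
    have hv : Integrable (fun p : ℝ × ℝ => ‖f p.1‖ * ‖h p.2‖) ν :=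
      (f.integrable.norm).mul_prod (h.integrable.norm)
    refine (hw.mul_prod hv).mono' ?_ ?_
    · apply Continuous.aestronglyMeasurable
      refine ((f.continuous.comp (continuous_fst.comp continuous_snd)).mul
        (h.continuous.comp (continuous_snd.comp continuous_snd))).mul ?_
      refine (Complex.continuous_ofReal.comp continuous_fst).mul (Complex.continuous_exp.comp ?_)
      exact (Complex.continuous_ofReal.comp continuous_fst).mul (continuous_const.add
        (continuous_const.mul ((Complex.continuous_ofReal.comp
          (continuous_fst.comp continuous_snd)).sub
          (Complex.continuous_ofReal.comp (continuous_snd.comp continuous_snd)))))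
    · refine Eventually.of_forall fun q => ?_
      show ‖Φ q.1 q.2‖ ≤ _
      simp only [hΦdef]
      rw [norm_mul, norm_mul, norm_mul, norm_mul]
      have h1 : ‖Complex.exp (q.1 * ((ε : ℂ) + Complex.I * ((q.2.1 : ℂ) - q.2.2)))‖
          = ‖Complex.exp ((q.1 : ℂ) * (ε : ℂ))‖ := by
        rw [Complex.norm_exp, Complex.norm_exp]
        congr 1
        simp [Complex.mul_re]
      rw [h1]
      ring_nf
      exact le_of_eq (by ring)
  -- the two-variable integrand after the k-integration
  have hstep3 : ∀ p : ℝ × ℝ, (∫ k in Iio (0:ℝ), Φ k p)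
      = f p.1 * h p.2 * ((((p.1 : ℂ) - p.2 - ε * Complex.I) ^ 2)⁻¹) := by
    intro p
    rw [show (fun k : ℝ => Φ k p) = fun k : ℝ => f p.1 * h p.2 *
        ((k : ℂ) * Complex.exp (k * ((ε : ℂ) + Complex.I * ((p.1 : ℂ) - p.2)))) from rfl]
    rw [integral_const_mul, ker_Iio (hre p)]
    congr 1
    rw [← inv_neg]
    congr 1
    linear_combination (-(((p.1 : ℂ) - p.2) ^ 2) - (ε : ℂ) ^ 2) * Complex.I_sq
  -- integrability of the position-space integrand
  have hLint : Integrable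
      (fun p : ℝ × ℝ => f p.1 * h p.2 * ((((p.1 : ℂ) - p.2 - ε * Complex.I) ^ 2)⁻¹)) ν := by
    have hne : ∀ p : ℝ × ℝ, ((p.1 : ℂ) - p.2 - ε * Complex.I) ≠ 0 := by
      intro p h0
      have := congrArg Complex.im h0
      simp at this
      linarith
    have hv : Integrable (fun p : ℝ × ℝ => (‖f p.1‖ * (ε ^ 2)⁻¹) * ‖h p.2‖) ν :=
      ((f.integrable.norm).mul_const ((ε^2)⁻¹)).mul_prod (h.integrable.norm)
    refine hv.mono' ?_ (Eventually.of_forall fun p => ?_)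
    · apply Continuous.aestronglyMeasurable
      refine ((f.continuous.comp continuous_fst).mul (h.continuous.comp continuous_snd)).mul ?_
      refine Continuous.inv₀ ?_ (fun p => pow_ne_zero _ (hne p))
      refine Continuous.pow ?_ 2
      exact ((Complex.continuous_ofReal.comp continuous_fst).sub
        (Complex.continuous_ofReal.comp continuous_snd)).sub continuous_const
    · rw [norm_mul, norm_mul]
      have hb : ‖((((p.1 : ℂ) - p.2 - ε * Complex.I) ^ 2)⁻¹)‖ ≤ (ε ^ 2)⁻¹ := by
        rw [norm_inv, norm_pow]
        refine inv_anti₀ (by positivity) ?_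
        refine pow_le_pow_left₀ hε.le ?_ 2
        have him : (((p.1 : ℂ) - p.2 - ε * Complex.I)).im = -ε := by simp
        calc ε = |(((p.1 : ℂ) - p.2 - ε * Complex.I)).im| := by
              rw [him, abs_neg, _root_.abs_of_nonneg hε.le]
          _ ≤ ‖((p.1 : ℂ) - p.2 - ε * Complex.I)‖ := Complex.abs_im_le_norm _
          _ = ‖((p.1 : ℂ) - p.2 - ε * Complex.I)‖ := rfl
      calc ‖f p.1‖ * ‖h p.2‖ * ‖((((p.1 : ℂ) - p.2 - ε * Complex.I) ^ 2)⁻¹)‖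
          ≤ ‖f p.1‖ * ‖h p.2‖ * (ε ^ 2)⁻¹ := by
            refine mul_le_mul_of_nonneg_left hb (by positivity)
        _ = ‖f p.1‖ * (ε ^ 2)⁻¹ * ‖h p.2‖ := by ring
  -- main chain
  symm
  calc (∫ k in Iio (0:ℝ),
        (k : ℂ) * Real.exp (ε * k) * ft (fun u => f u) (-k) * ft (fun u => h u) k)
      = ∫ k in Iio (0:ℝ), ∫ p : ℝ × ℝ, Φ k p ∂ν := by
        exact integral_congr_ae (Eventually.of_forall fun k => hstep1 k)
    _ = ∫ p : ℝ × ℝ, (∫ k in Iio (0:ℝ), Φ k p) ∂ν := integral_integral_swap hΦint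
    _ = ∫ p : ℝ × ℝ, f p.1 * h p.2 * ((((p.1 : ℂ) - p.2 - ε * Complex.I) ^ 2)⁻¹) ∂ν := by
        exact integral_congr_ae (Eventually.of_forall fun p => hstep3 p)
    _ = ∫ u : ℝ, ∫ u' : ℝ, f u * h u' * (((u : ℂ) - (u' : ℂ) - ε * Complex.I) ^ 2)⁻¹ :=
        integral_prod _ hLint
end

section
/- Let f, h : ℝ → ℂ be Schwartz functions. Then the limit lim_{ε→0⁺} −(1/π) ∫_ℝ ∫_ℝ f(u) h(u') (u − u' − iε)^{−2} du' du exists and equals (1/π) ∫_{0}^{∞} k f̂(k) ĥ(−k) dk. -/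
open MeasureTheory Complex Filter

open Set FourierTransform

lemma L1 {ε : ℝ} (hε : 0 < ε) :
    IntegrableOn (fun k : ℝ => k * Real.exp (-(ε * k))) (Ioi 0) := by
  apply integrable_of_isBigO_exp_neg (half_pos hε)
  · exact (continuous_id.mul (Real.continuous_exp.comp (continuous_const.mul continuous_id).neg)).continuousOn
  · have h1 : (fun k : ℝ => k) =O[atTop] fun k => Real.exp (ε/2 * k) :=
      (isLittleO_pow_exp_pos_mul_atTop 1 (half_pos hε)).isBigO.congr_left (by simp)
    have := h1.mul (Asymptotics.isBigO_refl (fun k : ℝ => Real.exp (-(ε * k))) atTop)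
    refine this.congr_right fun k => ?_
    rw [← Real.exp_add]; ring_nf

lemma L1' {ε : ℝ} (hε : 0 < ε) :
    IntegrableOn (fun k : ℝ => |k| * Real.exp (-(ε * k))) (Ioi 0) := by
  refine (L1 hε).congr_fun (fun k hk => ?_) measurableSet_Ioi
  rw [abs_of_pos hk]

lemma L2a {a : ℂ} (ha : 0 < a.re) :
    IntegrableOn (fun k : ℝ => (k : ℂ) * Complex.exp (-(a * k))) (Ioi 0) := by
  refine (L1' ha).mono' ?_ ?_
  · exact (Complex.continuous_ofReal.mul
      (Complex.continuous_exp.comp ((continuous_const.mul Complex.continuous_ofReal).neg))).aestronglyMeasurable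
  · filter_upwards with k
    rw [norm_mul, Complex.norm_exp]
    simp [Complex.mul_re]

lemma L2 {a : ℂ} (ha : 0 < a.re) :
    ∫ k in Ioi (0:ℝ), (k : ℂ) * Complex.exp (-(a * k)) = (a ^ 2)⁻¹ := by
  have ha0 : a ≠ 0 := fun h => by simp [h] at ha
  set F : ℝ → ℂ := fun k => -((k * a + 1)) * Complex.exp (-(a * k)) / a ^ 2 with hF
  have hderiv : ∀ k : ℝ, HasDerivAt F ((k : ℂ) * Complex.exp (-(a * k))) k := by
    intro k
    have hG : HasDerivAt (fun z : ℂ => -(z * a + 1) * Complex.exp (-(a * z)) / a ^ 2)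
        ((k : ℂ) * Complex.exp (-(a * k))) (k : ℝ) := by
      have h1 : HasDerivAt (fun z : ℂ => -(z * a + 1)) (-a) (k : ℝ) := by
        exact (((hasDerivAt_id (k : ℂ)).mul_const a).add_const 1).neg.congr_deriv (by simp)
      have h2 : HasDerivAt (fun z : ℂ => Complex.exp (-(a * z))) (-a * Complex.exp (-(a * k))) (k : ℝ) := by
        simpa [mul_comm] using (((hasDerivAt_id (k : ℂ)).const_mul a).neg).cexp
      have := (h1.mul h2).div_const (a ^ 2)
      refine this.congr_deriv ?_
      rw [div_eq_iff (pow_ne_zero 2 ha0)]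
      ring
    exact hG.comp_ofReal
  have htend : Tendsto F atTop (nhds 0) := by

    have hb : Tendsto (fun k : ℝ => (‖a‖ * (k * Real.exp (-(a.re * k))) + Real.exp (-(a.re * k))) / ‖a ^ 2‖) atTop (nhds ((‖a‖ * 0 + 0) / ‖a ^ 2‖)) := by
      refine Tendsto.div_const ?_ _
      refine (Tendsto.const_mul _ ?_).add ?_
      · have := (isLittleO_pow_exp_pos_mul_atTop 1 ha).tendsto_div_nhds_zero
        refine this.congr fun k => by simp [Real.exp_neg, div_eq_mul_inv]
      · exact Real.tendsto_exp_atBot.comp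
          (tendsto_neg_atTop_atBot.comp (tendsto_id.const_mul_atTop ha))
    simp only [mul_zero, zero_add, add_zero, zero_div] at hb
    apply squeeze_zero_norm' _ hb
    filter_upwards [eventually_ge_atTop (0:ℝ)] with k hk
    have hre : (-(a * (k:ℂ))).re = -(a.re * k) := by simp [Complex.mul_re]
    have h1 : ‖F k‖ = ‖(k:ℂ) * a + 1‖ * Real.exp (-(a.re * k)) / ‖a ^ 2‖ := by
      rw [hF]
      rw [norm_div, norm_mul, norm_neg, Complex.norm_exp, hre]
    rw [h1]
    have h2 : ‖(k:ℂ) * a + 1‖ ≤ ‖a‖ * k + 1 := by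
      calc ‖(k:ℂ) * a + 1‖ ≤ ‖(k:ℂ) * a‖ + ‖(1:ℂ)‖ := norm_add_le _ _
        _ = ‖a‖ * k + 1 := by
            rw [norm_mul, Complex.norm_real, Real.norm_eq_abs, _root_.abs_of_nonneg hk, norm_one]
            ring
    have hnum : ‖(k:ℂ) * a + 1‖ * Real.exp (-(a.re * k)) ≤
        ‖a‖ * (k * Real.exp (-(a.re * k))) + Real.exp (-(a.re * k)) := by
      calc ‖(k:ℂ) * a + 1‖ * Real.exp (-(a.re * k)) ≤ (‖a‖ * k + 1) * Real.exp (-(a.re * k)) :=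
            mul_le_mul_of_nonneg_right h2 (Real.exp_nonneg _)
        _ = _ := by ring
    exact (div_le_div_iff_of_pos_right (norm_pos_iff.mpr (pow_ne_zero 2 ha0))).mpr hnum
  have := integral_Ioi_of_hasDerivAt_of_tendsto (a := 0)
    (hderiv 0).continuousAt.continuousWithinAt (fun x _ => hderiv x) (L2a ha) htend
  rw [this]
  simp only [hF, Complex.ofReal_zero, zero_mul, zero_add, mul_zero, neg_zero, Complex.exp_zero,
    mul_one, zero_sub, neg_div, neg_neg, one_div]

lemma L3 {ε : ℝ} (hε : 0 < ε) (x : ℝ) :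
    (((x:ℂ) - ε * Complex.I) ^ 2)⁻¹
      = -∫ k in Ioi (0:ℝ), (k : ℂ) * Complex.exp (-((ε + x * Complex.I) * k)) := by
  have ha : (0:ℝ) < ((ε:ℂ) + x * Complex.I).re := by simp [hε]
  rw [L2 ha]
  have hsq : ((x:ℂ) - ε * Complex.I) ^ 2 = -(((ε:ℂ) + x * Complex.I) ^ 2) := by
    have := Complex.I_sq
    ring_nf
    rw [Complex.I_sq]
    ring
  rw [hsq, inv_neg]

lemma ft_eq (g : SchwartzMap ℝ ℂ) (k : ℝ) :
    ft (fun u => g u) k = (SchwartzMap.fourierTransformCLM ℂ g) (k / (2 * Real.pi)) := by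
  have : ((SchwartzMap.fourierTransformCLM ℂ g) : ℝ → ℂ) = 𝓕 (g : ℝ → ℂ) := by
    rw [SchwartzMap.fourierTransformCLM_apply]
    rfl
  rw [this, Real.fourier_real_eq_integral_exp_smul]
  unfold ft
  congr 1
  ext u
  rw [smul_eq_mul, mul_comm]
  congr 2
  have hpi : (2 * Real.pi) ≠ 0 := by positivity
  have : -2 * Real.pi * u * (k / (2 * Real.pi)) = -(u * k) := by field_simp
  rw [this]
  push_cast
  ring

lemma ft_cont (g : SchwartzMap ℝ ℂ) : Continuous (ft (fun u => g u)) := by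
  have : ft (fun u => g u) = fun k => (SchwartzMap.fourierTransformCLM ℂ g) (k / (2 * Real.pi)) := by
    ext k; exact ft_eq g k
  rw [this]
  exact (SchwartzMap.fourierTransformCLM ℂ g).continuous.comp (continuous_id.div_const _)

lemma ft_decay (g : SchwartzMap ℝ ℂ) :
    ∃ C : ℝ, 0 ≤ C ∧ ∀ k : ℝ, ‖ft (fun u => g u) k‖ ≤ C / (1 + k ^ 2) := by
  set G := SchwartzMap.fourierTransformCLM ℂ g with hG
  obtain ⟨C0, hC0, h0⟩ := G.decay 0 0
  obtain ⟨C2, hC2, h2⟩ := G.decay 2 0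
  have hGb : ∀ x : ℝ, (1 + x ^ 2) * ‖G x‖ ≤ C0 + C2 := by
    intro x
    have e0 := h0 x
    have e2 := h2 x
    rw [norm_iteratedFDeriv_zero] at e0 e2
    simp only [pow_zero, one_mul] at e0
    have : ‖x‖ ^ 2 = x ^ 2 := by rw [Real.norm_eq_abs, _root_.sq_abs]
    rw [this] at e2
    nlinarith
  refine ⟨(2 * Real.pi) ^ 2 * (C0 + C2), by positivity, fun k => ?_⟩
  rw [ft_eq]
  have h1 : (0:ℝ) < 1 + (k / (2 * Real.pi)) ^ 2 := by positivity
  have hle : ‖G (k / (2 * Real.pi))‖ ≤ (C0 + C2) / (1 + (k / (2 * Real.pi)) ^ 2) :=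
    (le_div_iff₀ h1).mpr (by linarith [hGb (k / (2 * Real.pi))])
  refine hle.trans ?_
  rw [div_le_div_iff₀ h1 (by positivity)]
  have hpi : (1:ℝ) ≤ 2 * Real.pi := by nlinarith [Real.pi_gt_three]
  have key : 1 + k ^ 2 ≤ (2 * Real.pi) ^ 2 * (1 + (k / (2 * Real.pi)) ^ 2) := by
    rw [div_pow, mul_add, mul_div_cancel₀ _ (by positivity : ((2:ℝ) * Real.pi) ^ 2 ≠ 0)]
    nlinarith
  nlinarith [norm_nonneg (G (k / (2 * Real.pi))), sq_nonneg k]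

lemma ft_le (g : SchwartzMap ℝ ℂ) (k : ℝ) : ‖ft (fun u => g u) k‖ ≤ ∫ u : ℝ, ‖g u‖ := by
  refine (norm_integral_le_integral_norm _).trans_eq ?_
  congr 1
  ext u
  rw [norm_mul, Complex.norm_exp]
  simp [Complex.mul_re]

lemma g_integrable (f h : SchwartzMap ℝ ℂ) :
    IntegrableOn (fun k : ℝ => (k : ℂ) * ft (fun u => f u) k * ft (fun u => h u) (-k))
      (Ioi 0) := by
  obtain ⟨Cf, hCf, hf⟩ := ft_decay f
  obtain ⟨Ch, hCh, hh⟩ := ft_decay h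
  refine Integrable.integrableOn ?_
  refine ((integrable_inv_one_add_sq.const_mul (Cf * Ch)).mono' ?_ ?_)
  · exact ((Complex.continuous_ofReal.mul (ft_cont f)).mul
      ((ft_cont h).comp continuous_neg)).aestronglyMeasurable
  · filter_upwards with k
    rw [norm_mul, norm_mul]
    have h1 : (0:ℝ) < 1 + k ^ 2 := by positivity
    have hk : ‖(k:ℂ)‖ = |k| := by rw [Complex.norm_real, Real.norm_eq_abs]
    have e1 := hf k
    have e2 : ‖ft (fun u => h u) (-k)‖ ≤ Ch / (1 + k ^ 2) := by simpa using hh (-k)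
    have hkk : |k| ≤ 1 + k ^ 2 := by nlinarith [abs_nonneg k, _root_.sq_abs k]
    rw [hk]
    calc |k| * ‖ft (fun u => f u) k‖ * ‖ft (fun u => h u) (-k)‖
        ≤ (1 + k ^ 2) * (Cf / (1 + k ^ 2)) * (Ch / (1 + k ^ 2)) := by gcongr
      _ = Cf * Ch * (1 + k ^ 2)⁻¹ := by field_simp

lemma ft_neg_eq (h : SchwartzMap ℝ ℂ) (k : ℝ) :
    ft (fun u => h u) (-k) = ∫ u' : ℝ, h u' * Complex.exp (Complex.I * k * u') := by
  unfold ft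
  congr 1
  ext u'
  congr 1
  push_cast
  ring

lemma inner_step (h : SchwartzMap ℝ ℂ) {ε : ℝ} (hε : 0 < ε) (u : ℝ) :
    ∫ u' : ℝ, h u' * ((((u:ℂ) - u') - ε * Complex.I) ^ 2)⁻¹
      = -∫ k in Ioi (0:ℝ),
          (k : ℂ) * Complex.exp (-((ε + u * Complex.I) * k)) * ft (fun v => h v) (-k) := by
  have hker : ∀ u' : ℝ, ((((u:ℂ) - u') - ε * Complex.I) ^ 2)⁻¹
      = -∫ k in Ioi (0:ℝ), (k : ℂ) * Complex.exp (-((ε + (u - u') * Complex.I) * k)) := by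
    intro u'
    have := L3 hε (u - u')
    push_cast at this
    exact this
  -- rewrite the inner kernel
  have step1 : (∫ u' : ℝ, h u' * ((((u:ℂ) - u') - ε * Complex.I) ^ 2)⁻¹)
      = -∫ u' : ℝ, ∫ k in Ioi (0:ℝ),
          h u' * ((k : ℂ) * Complex.exp (-((ε + (u - u') * Complex.I) * k))) := by
    rw [← integral_neg]
    congr 1
    ext u'
    rw [hker u', mul_neg, integral_const_mul]
  rw [step1]
  -- Fubini
  have hint : Integrable (Function.uncurry fun (u' : ℝ) (k : ℝ) =>
      h u' * ((k : ℂ) * Complex.exp (-((ε + (u - u') * Complex.I) * k))))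
      (volume.prod (volume.restrict (Ioi 0))) := by
    refine ((h.integrable.norm.mul_prod (L1' hε)).mono' ?_ ?_)
    · apply Continuous.aestronglyMeasurable
      fun_prop
    · filter_upwards with z
      simp only [Function.uncurry]
      rw [norm_mul, norm_mul, Complex.norm_exp]
      have : (-((↑ε + (↑u - ↑z.1) * Complex.I) * ↑z.2)).re = -(ε * z.2) := by
        simp [Complex.mul_re, Complex.add_re, Complex.mul_im]
      rw [this]
      simp [Complex.norm_real, norm_mul, abs_mul]
  rw [integral_integral_swap hint]
  congr 1
  refine setIntegral_congr_fun measurableSet_Ioi fun k _ => ?_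
  have hexp : ∀ u' : ℝ, Complex.exp (-((↑ε + (↑u - ↑u') * Complex.I) * ↑k))
      = Complex.exp (-((↑ε + ↑u * Complex.I) * ↑k)) * Complex.exp (Complex.I * k * u') := by
    intro u'
    rw [← Complex.exp_add]
    congr 1
    push_cast
    ring
  calc (∫ u' : ℝ, h u' * ((k : ℂ) * Complex.exp (-((ε + (u - u') * Complex.I) * k))))
      = ∫ u' : ℝ, ((k : ℂ) * Complex.exp (-((ε + u * Complex.I) * k)))
          * (h u' * Complex.exp (Complex.I * k * u')) := by
        congr 1
        ext u'
        rw [hexp u']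
        ring
    _ = (k : ℂ) * Complex.exp (-((ε + u * Complex.I) * k)) * ft (fun v => h v) (-k) := by
        rw [integral_const_mul, ft_neg_eq]

lemma outer_step (f h : SchwartzMap ℝ ℂ) {ε : ℝ} (hε : 0 < ε) :
    ∫ u : ℝ, f u * (-∫ k in Ioi (0:ℝ),
        (k : ℂ) * Complex.exp (-((ε + u * Complex.I) * k)) * ft (fun v => h v) (-k))
      = -∫ k in Ioi (0:ℝ),
          (k : ℂ) * Complex.exp (-((ε:ℂ) * k)) * ft (fun v => f v) k * ft (fun v => h v) (-k) := by
  have step1 : (∫ u : ℝ, f u * (-∫ k in Ioi (0:ℝ),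
        (k : ℂ) * Complex.exp (-((ε + u * Complex.I) * k)) * ft (fun v => h v) (-k)))
      = -∫ u : ℝ, ∫ k in Ioi (0:ℝ),
          f u * ((k : ℂ) * Complex.exp (-((ε + u * Complex.I) * k)) * ft (fun v => h v) (-k)) := by
    rw [← integral_neg]
    congr 1
    ext u
    rw [mul_neg, integral_const_mul]
  rw [step1]
  have hexpc : Continuous fun z : ℝ × ℝ =>
      (z.2 : ℂ) * Complex.exp (-(((ε:ℂ) + z.1 * Complex.I) * z.2)) := by fun_prop
  have hint : Integrable (Function.uncurry fun (u : ℝ) (k : ℝ) =>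
      f u * ((k : ℂ) * Complex.exp (-((ε + u * Complex.I) * k)) * ft (fun v => h v) (-k)))
      (volume.prod (volume.restrict (Ioi 0))) := by
    refine ((f.integrable.norm.mul_prod ((L1' hε).mul_const (∫ u : ℝ, ‖h u‖))).mono' ?_ ?_)
    · exact ((f.continuous.comp continuous_fst).mul
        (hexpc.mul ((ft_cont h).comp continuous_snd.neg))).aestronglyMeasurable
    · filter_upwards with z
      simp only [Function.uncurry]
      rw [norm_mul, norm_mul, norm_mul, Complex.norm_exp]
      have hre : (-(((ε:ℂ) + ↑z.1 * Complex.I) * ↑z.2)).re = -(ε * z.2) := by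
        simp [Complex.mul_re, Complex.add_re, Complex.mul_im]
      rw [hre]
      have hk : ‖((z.2:ℝ) : ℂ)‖ = |z.2| := by rw [Complex.norm_real, Real.norm_eq_abs]
      rw [hk]
      have := ft_le h (-z.2)
      gcongr
  rw [integral_integral_swap hint]
  congr 1
  refine setIntegral_congr_fun measurableSet_Ioi fun k _ => ?_
  have hexp : ∀ u : ℝ, Complex.exp (-(((ε:ℂ) + ↑u * Complex.I) * ↑k))
      = Complex.exp (-((ε:ℂ) * ↑k)) * Complex.exp (-Complex.I * ↑k * ↑u) := by
    intro u
    rw [← Complex.exp_add]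
    congr 1
    ring
  calc (∫ u : ℝ, f u * ((k : ℂ) * Complex.exp (-(((ε:ℂ) + ↑u * Complex.I) * ↑k))
          * ft (fun v => h v) (-k)))
      = ∫ u : ℝ, ((k : ℂ) * Complex.exp (-((ε:ℂ) * ↑k)) * ft (fun v => h v) (-k))
          * (f u * Complex.exp (-Complex.I * ↑k * ↑u)) := by
        congr 1
        ext u
        rw [hexp u]
        ring
    _ = (k : ℂ) * Complex.exp (-((ε:ℂ) * ↑k)) * ft (fun v => f v) k * ft (fun v => h v) (-k) := by
        rw [integral_const_mul]
        unfold ft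
        ring

lemma step_eps (f h : SchwartzMap ℝ ℂ) {ε : ℝ} (hε : 0 < ε) :
    ∫ u : ℝ, ∫ u' : ℝ, f u * h u' * (((u : ℂ) - (u' : ℂ) - ε * Complex.I) ^ 2)⁻¹
      = -∫ k in Ioi (0:ℝ),
          (k : ℂ) * Complex.exp (-((ε:ℂ) * k)) * ft (fun v => f v) k * ft (fun v => h v) (-k) := by
  have h1 : ∀ u : ℝ, (∫ u' : ℝ, f u * h u' * (((u : ℂ) - (u' : ℂ) - ε * Complex.I) ^ 2)⁻¹)
      = f u * (-∫ k in Ioi (0:ℝ),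
          (k : ℂ) * Complex.exp (-((ε + u * Complex.I) * k)) * ft (fun v => h v) (-k)) := by
    intro u
    rw [← inner_step h hε u, ← integral_const_mul]
    congr 1
    ext u'
    ring
  calc (∫ u : ℝ, ∫ u' : ℝ, f u * h u' * (((u : ℂ) - (u' : ℂ) - ε * Complex.I) ^ 2)⁻¹)
      = ∫ u : ℝ, f u * (-∫ k in Ioi (0:ℝ),
          (k : ℂ) * Complex.exp (-((ε + u * Complex.I) * k)) * ft (fun v => h v) (-k)) := by
        congr 1
        ext u
        exact h1 u
    _ = _ := outer_step f h hε

/-- The `ε → 0⁺` limit of the regularized boundary two-point function of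
Schwartz functions exists and equals the mode expansion
`(1/π) ∫₀^∞ k f̂(k) ĥ(−k) dk`. -/
theorem boundary_two_point_limit (f h : SchwartzMap ℝ ℂ) :
    Tendsto
      (fun ε : ℝ =>
        -(1 / (Real.pi : ℂ)) *
          ∫ u : ℝ, ∫ u' : ℝ, f u * h u' * (((u : ℂ) - (u' : ℂ) - ε * Complex.I) ^ 2)⁻¹)
      (nhdsWithin 0 (Set.Ioi 0))
      (nhds ((1 / (Real.pi : ℂ)) *
        ∫ k in Set.Ioi (0 : ℝ), (k : ℂ) * ft (fun u => f u) k * ft (fun u => h u) (-k))) := by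
  have hdct : Tendsto
      (fun ε : ℝ => ∫ k in Ioi (0:ℝ),
        (k : ℂ) * Complex.exp (-((ε:ℂ) * k)) * ft (fun v => f v) k * ft (fun v => h v) (-k))
      (nhdsWithin 0 (Set.Ioi 0))
      (nhds (∫ k in Set.Ioi (0 : ℝ),
        (k : ℂ) * ft (fun u => f u) k * ft (fun u => h u) (-k))) := by
    apply tendsto_integral_filter_of_dominated_convergence
      (bound := fun k : ℝ => ‖(k : ℂ) * ft (fun u => f u) k * ft (fun u => h u) (-k)‖)
    · filter_upwards with ε
      refine Continuous.aestronglyMeasurable ?_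
      refine Continuous.mul (Continuous.mul (Continuous.mul ?_ ?_) (ft_cont f)) ?_
      · exact Complex.continuous_ofReal
      · fun_prop
      · exact (ft_cont h).comp continuous_neg
    · filter_upwards [self_mem_nhdsWithin] with ε hε
      filter_upwards [ae_restrict_mem measurableSet_Ioi] with k hk
      have heq : (k : ℂ) * Complex.exp (-((ε:ℂ) * k)) * ft (fun v => f v) k
            * ft (fun v => h v) (-k)
          = Complex.exp (-((ε:ℂ) * k)) *
            ((k : ℂ) * ft (fun v => f v) k * ft (fun v => h v) (-k)) := by ring
      rw [heq, norm_mul]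
      have hexp : ‖Complex.exp (-((ε:ℂ) * k))‖ ≤ 1 := by
        rw [Complex.norm_exp]
        rw [Real.exp_le_one_iff]
        have : (-((ε:ℂ) * k)).re = -(ε * k) := by
          simp [Complex.mul_re]
        rw [this]
        have : 0 ≤ ε * k := le_of_lt (mul_pos (mem_Ioi.mp hε) (mem_Ioi.mp hk))
        linarith
      calc ‖Complex.exp (-((ε:ℂ) * k))‖ * ‖(k : ℂ) * ft (fun v => f v) k * ft (fun v => h v) (-k)‖
          ≤ 1 * ‖(k : ℂ) * ft (fun v => f v) k * ft (fun v => h v) (-k)‖ := by gcongr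
        _ = _ := one_mul _
    · exact (g_integrable f h).norm
    · filter_upwards with k
      have hcont : Continuous fun ε : ℝ =>
          (k:ℂ) * Complex.exp (-((ε:ℂ) * k)) * ft (fun v => f v) k * ft (fun v => h v) (-k) := by
        refine Continuous.mul (Continuous.mul (Continuous.mul continuous_const ?_) continuous_const)
          continuous_const
        fun_prop
      have := hcont.tendsto 0
      simp only [Complex.ofReal_zero, zero_mul, neg_zero, Complex.exp_zero, mul_one] at this
      exact this.mono_left nhdsWithin_le_nhds
  have hev : (fun ε : ℝ => -(1 / (Real.pi : ℂ)) *
          ∫ u : ℝ, ∫ u' : ℝ, f u * h u' * (((u : ℂ) - (u' : ℂ) - ε * Complex.I) ^ 2)⁻¹)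
        =ᶠ[nhdsWithin (0:ℝ) (Set.Ioi 0)]
      (fun ε : ℝ => (1 / (Real.pi : ℂ)) * ∫ k in Ioi (0:ℝ),
            (k : ℂ) * Complex.exp (-((ε:ℂ) * k)) * ft (fun v => f v) k * ft (fun v => h v) (-k)) := by
    filter_upwards [self_mem_nhdsWithin] with ε hε
    rw [step_eps f h (mem_Ioi.mp hε)]
    ring
  refine Tendsto.congr' hev.symm ?_
  exact hdct.const_mul _
end

section
/- Let f : ℝ → ℝ be a real-valued Schwartz function. Then lim_{ε→0⁺} −(1/π) ∫_ℝ ∫_ℝ f(u) f(u') (u − u' − iε)^{−2} du' du = (1/π) ∫_{0}^{∞} k |f̂(k)|² dk ≥ 0. -/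
open MeasureTheory Complex Filter

namespace BoundaryTwoPoint

open Set SchwartzMap FourierTransform Real

/-! ### Elementary integrability and the basic exponential integral -/

lemma integrableOn_id_mul_exp {b : ℝ} (hb : 0 < b) :
    IntegrableOn (fun k : ℝ => k * Real.exp (-b * k)) (Set.Ioi 0) := by
  have h2 : IntegrableOn (fun k : ℝ => (2 / b) * Real.exp (-(b/2) * k)) (Set.Ioi 0) :=
    ((exp_neg_integrableOn_Ioi 0 (by linarith)).const_mul _)
  refine h2.mono' ?_ ?_
  · exact (continuous_id.mul (Real.continuous_exp.comp
      (continuous_const.mul continuous_id))).aestronglyMeasurable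
  · filter_upwards [ae_restrict_mem measurableSet_Ioi] with k hk
    have hk0 : (0:ℝ) < k := hk
    have hsplit : Real.exp (-b * k) = Real.exp (-(b/2) * k) * Real.exp (-(b/2)*k) := by
      rw [← Real.exp_add]; ring_nf
    have hle : k * Real.exp (-(b/2) * k) ≤ 2 / b := by
      have h1 : (b/2) * k ≤ Real.exp ((b/2)*k) := by
        have := Real.add_one_le_exp ((b/2)*k); linarith
      have hexp : 0 < Real.exp ((b/2)*k) := Real.exp_pos _
      rw [neg_mul, Real.exp_neg, ← div_eq_mul_inv,
        div_le_div_iff₀ hexp (by linarith : (0:ℝ) < b) ]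
      calc k * b = 2 * ((b/2)*k) := by ring
        _ ≤ 2 * Real.exp ((b/2)*k) := by linarith
    have : ‖k * Real.exp (-b * k)‖ = k * Real.exp (-(b/2)*k) * Real.exp (-(b/2)*k) := by
      rw [Real.norm_eq_abs, _root_.abs_of_nonneg (by positivity), hsplit]; ring
    rw [this]
    calc k * Real.exp (-(b/2)*k) * Real.exp (-(b/2)*k)
        ≤ (2/b) * Real.exp (-(b/2)*k) := by
          apply mul_le_mul_of_nonneg_right hle (Real.exp_pos _).le
      _ = (2 / b) * Real.exp (-(b/2) * k) := rfl

lemma integrableOn_cexp {a : ℂ} (ha : 0 < a.re) :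
    IntegrableOn (fun k : ℝ => (k:ℂ) * Complex.exp (-(a * k))) (Set.Ioi 0) := by
  refine (integrableOn_id_mul_exp ha).mono' ?_ ?_
  · exact (Complex.continuous_ofReal.mul (Complex.continuous_exp.comp
      ((continuous_const.mul Complex.continuous_ofReal).neg))).aestronglyMeasurable
  · filter_upwards [ae_restrict_mem measurableSet_Ioi] with k hk
    have hk0 : (0:ℝ) < k := hk
    have : ‖(k:ℂ) * Complex.exp (-(a * k))‖ = |k| * Real.exp (-(a.re * k)) := by
      rw [norm_mul, Complex.norm_real, Real.norm_eq_abs,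
        Complex.norm_exp]
      congr 2
      simp [Complex.mul_re]
    rw [this, _root_.abs_of_nonneg hk0.le, neg_mul]

/-- `∫₀^∞ k e^{-ak} dk = a⁻²` for `Re a > 0`. -/
lemma integral_k_exp {a : ℂ} (ha : 0 < a.re) :
    ∫ k in Set.Ioi (0:ℝ), (k:ℂ) * Complex.exp (-(a * k)) = (a^2)⁻¹ := by
  have ha0 : a ≠ 0 := fun h => by simp [h] at ha
  have hderiv : ∀ k ∈ Set.Ici (0:ℝ),
      HasDerivAt (fun k : ℝ => -(((k:ℂ)/a + (a^2)⁻¹)) * Complex.exp (-(a*k)))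
        ((k:ℂ) * Complex.exp (-(a*k))) k := by
    intro k _
    have h1 : HasDerivAt (fun k : ℝ => ((k:ℂ)/a + (a^2)⁻¹)) a⁻¹ k := by
      simpa using ((Complex.ofRealCLM.hasDerivAt (x := k)).div_const a).add_const ((a^2)⁻¹)
    have h2 : HasDerivAt (fun k : ℝ => Complex.exp (-(a*k))) (-a * Complex.exp (-(a*k))) k := by
      have : HasDerivAt (fun k : ℝ => -(a*(k:ℂ))) (-a) k := by
        simpa [Pi.neg_def] using ((Complex.ofRealCLM.hasDerivAt (x := k)).const_mul a).neg
      simpa [mul_comm] using this.cexp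
    have := (h1.neg.mul h2)
    refine this.congr_deriv ?_
    simp only [Pi.neg_apply]
    field_simp
    ring
  have htend : Filter.Tendsto (fun k : ℝ => -(((k:ℂ)/a + (a^2)⁻¹)) * Complex.exp (-(a*k)))
      Filter.atTop (nhds 0) := by
    apply squeeze_zero_norm'
      (a := fun k => (k * ‖(1:ℂ)/a‖ + ‖(a^2)⁻¹‖) * Real.exp (-a.re * k))
    · filter_upwards [Filter.eventually_ge_atTop (0:ℝ)] with k hk
      rw [norm_mul, norm_neg]
      have h1 : ‖(k:ℂ)/a + (a^2)⁻¹‖ ≤ k * ‖(1:ℂ)/a‖ + ‖(a^2)⁻¹‖ := by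
        refine (norm_add_le _ _).trans ?_
        gcongr
        rw [div_eq_mul_inv, ← one_div]
        rw [norm_mul, Complex.norm_real, Real.norm_eq_abs, _root_.abs_of_nonneg hk]
      have h2 : ‖Complex.exp (-(a*k))‖ = Real.exp (-a.re * k) := by
        rw [Complex.norm_exp]; congr 1; simp [Complex.mul_re]
      rw [h2]
      exact mul_le_mul_of_nonneg_right h1 (Real.exp_pos _).le
    · have h3 : Filter.Tendsto (fun k : ℝ => k * Real.exp (-a.re * k))
          Filter.atTop (nhds 0) := by
        simpa using tendsto_rpow_mul_exp_neg_mul_atTop_nhds_zero 1 a.re ha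
      have h4 : Filter.Tendsto (fun k : ℝ => Real.exp (-a.re * k)) Filter.atTop (nhds 0) := by
        simpa using tendsto_rpow_mul_exp_neg_mul_atTop_nhds_zero 0 a.re ha
      have := ((h3.const_mul ‖(1:ℂ)/a‖).add (h4.const_mul ‖(1:ℂ)/a^2‖))
      simp only [mul_zero, add_zero, zero_add] at this
      convert this using 2 with k
      push_cast
      ring
  have := integral_Ioi_of_hasDerivAt_of_tendsto' hderiv (integrableOn_cexp ha) htend
  rw [this]
  simp only [Complex.ofReal_zero, mul_zero, neg_zero, Complex.exp_zero]
  field_simp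
  ring

/-! ### Schwartz-function facts -/

noncomputable def toComplexSchwartz (f : SchwartzMap ℝ ℝ) : SchwartzMap ℝ ℂ where
  toFun x := (f x : ℂ)
  smooth' := Complex.ofRealCLM.contDiff.comp f.smooth'
  decay' := by
    intro k n
    obtain ⟨C, hC⟩ := f.decay' k n
    refine ⟨C, fun x => ?_⟩
    have : (fun x : ℝ => (f x : ℂ)) = Complex.ofRealLI ∘ f := rfl
    rw [this]
    rw [Complex.ofRealLI.norm_iteratedFDeriv_comp_left (f.smooth ⊤).contDiffAt (by exact_mod_cast le_top)]
    exact hC x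

@[simp] lemma toComplexSchwartz_apply (f : SchwartzMap ℝ ℝ) (x : ℝ) :
    toComplexSchwartz f x = (f x : ℂ) := rfl

lemma ft_eq (f : SchwartzMap ℝ ℝ) (k : ℝ) :
    ft (fun u => (f u : ℂ)) k
      = (fourierTransformCLM ℂ (toComplexSchwartz f)) (k / (2 * Real.pi)) := by
  rw [SchwartzMap.fourierTransformCLM_apply, SchwartzMap.fourier_coe, Real.fourier_real_eq_integral_exp_smul]
  unfold ft
  congr 1
  ext u
  rw [smul_eq_mul, mul_comm]
  congr 2
  have : -2 * Real.pi * u * (k / (2 * Real.pi)) = -(u*k) := by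
    field_simp
  rw [this]
  push_cast
  ring

lemma ft_conj (f : SchwartzMap ℝ ℝ) (k : ℝ) :
    (starRingEnd ℂ) (ft (fun u => (f u : ℂ)) k)
      = ∫ u : ℝ, (f u : ℂ) * Complex.exp (Complex.I * k * u) := by
  unfold ft
  rw [← integral_conj]
  congr 1
  ext u
  rw [map_mul, Complex.conj_ofReal, ← Complex.exp_conj]
  congr 1
  simp

lemma ft_bounded (f : SchwartzMap ℝ ℝ) :
    ∃ M : ℝ, 0 ≤ M ∧ ∀ k : ℝ, ‖ft (fun u => (f u : ℂ)) k‖ ≤ M := by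
  refine ⟨(SchwartzMap.seminorm ℝ 0 0) (fourierTransformCLM ℂ (toComplexSchwartz f)),
    apply_nonneg _ _, fun k => ?_⟩
  rw [ft_eq]
  exact SchwartzMap.norm_le_seminorm ℝ _ _

lemma ft_continuous (f : SchwartzMap ℝ ℝ) :
    Continuous fun k : ℝ => ft (fun u => (f u : ℂ)) k := by
  have : (fun k : ℝ => ft (fun u => (f u : ℂ)) k)
      = fun k : ℝ => (fourierTransformCLM ℂ (toComplexSchwartz f)) (k / (2 * Real.pi)) := by
    ext k; exact ft_eq f k
  rw [this]
  exact (fourierTransformCLM ℂ (toComplexSchwartz f)).2.continuous.comp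
    (continuous_id.div_const _)

lemma ft_sq_integrable (f : SchwartzMap ℝ ℝ) :
    IntegrableOn (fun k : ℝ => k * ‖ft (fun u => (f u : ℂ)) k‖ ^ 2) (Set.Ioi 0) := by
  obtain ⟨M, hM0, hM⟩ := ft_bounded f
  set g := fourierTransformCLM ℂ (toComplexSchwartz f)
  have h1 : Integrable (fun y : ℝ => ‖y‖ * ‖g y‖) volume := by
    simpa using g.integrable_pow_mul volume 1
  have h2 : Integrable (fun k : ℝ => ‖k / (2*Real.pi)‖ * ‖g (k / (2*Real.pi))‖) volume :=
    h1.comp_div (by positivity)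
  have h3 : Integrable (fun k : ℝ =>
      ((2*Real.pi) * M) * (‖k / (2*Real.pi)‖ * ‖g (k / (2*Real.pi))‖)) volume :=
    h2.const_mul _
  refine (h3.integrableOn).mono' ?_ ?_
  · apply Continuous.aestronglyMeasurable
    have hcont : Continuous fun k : ℝ => ft (fun u => (f u : ℂ)) k := ft_continuous f
    fun_prop
  · filter_upwards [ae_restrict_mem measurableSet_Ioi] with k hk
    have hk0 : (0:ℝ) < k := hk
    rw [Real.norm_eq_abs, _root_.abs_of_nonneg (by positivity)]
    have : k * ‖ft (fun u => (f u : ℂ)) k‖ ^ 2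
        ≤ k * (‖ft (fun u => (f u : ℂ)) k‖ * M) := by
      rw [pow_two]
      have := hM k
      gcongr
    refine this.trans ?_
    rw [ft_eq]
    rw [Real.norm_eq_abs, _root_.abs_of_nonneg (by positivity : (0:ℝ) ≤ k / (2*Real.pi))]
    have hpi : (0:ℝ) < 2 * Real.pi := by positivity
    have : 2 * Real.pi * M * (k / (2*Real.pi) * ‖g (k / (2*Real.pi))‖)
        = k * (‖g (k / (2*Real.pi))‖ * M) := by
      field_simp
    rw [this]

lemma norm_cexp_ofReal_mul (a : ℂ) (k : ℝ) :
    ‖Complex.exp (-(a * k))‖ = Real.exp (-(a.re * k)) := by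
  rw [Complex.norm_exp]
  congr 1
  simp [Complex.mul_re]

/-! ### The Fubini computation for fixed `ε > 0` -/

lemma double_integral_eq (f : SchwartzMap ℝ ℝ) {ε : ℝ} (hε : 0 < ε) :
    ∫ u : ℝ, ∫ u' : ℝ,
        (f u : ℂ) * (f u' : ℂ) * (((u : ℂ) - (u' : ℂ) - ε * Complex.I) ^ 2)⁻¹
      = -∫ k in Set.Ioi (0:ℝ), (k:ℂ) * Complex.exp (-((ε:ℂ) * k)) *
          ((‖ft (fun u => (f u : ℂ)) k‖ ^ 2 : ℝ) : ℂ) := by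
  set F : ℝ → ℂ := fun u => (f u : ℂ) with hF
  have hFint : Integrable F := by
    have := (toComplexSchwartz f).integrable (μ := volume)
    refine this.congr (Eventually.of_forall fun x => ?_)
    simp [hF]
  have hFcont : Continuous F := Complex.continuous_ofReal.comp f.continuous
  obtain ⟨M, hM0, hM⟩ := ft_bounded f
  set Cc : ℝ → ℂ := fun k => (starRingEnd ℂ) (ft F k) with hCc
  have hCcnorm : ∀ k, ‖Cc k‖ = ‖ft F k‖ := fun k => RCLike.norm_conj _
  have hCccont : Continuous Cc := Complex.continuous_conj.comp (ft_continuous f)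
  have hker : ∀ u u' : ℝ, (((u : ℂ) - (u' : ℂ) - ε * Complex.I) ^ 2)⁻¹
      = -∫ k in Set.Ioi (0:ℝ), (k:ℂ) *
          Complex.exp (-(((ε:ℂ) + Complex.I * ((u:ℂ) - (u':ℂ))) * k)) := by
    intro u u'
    have ha : (0:ℝ) < ((ε:ℂ) + Complex.I * ((u:ℂ) - (u':ℂ))).re := by
      simpa [Complex.add_re, Complex.mul_re] using hε
    rw [integral_k_exp ha]
    have h2 : ((u : ℂ) - (u' : ℂ) - ε * Complex.I) ^ 2
        = -(((ε:ℂ) + Complex.I * ((u:ℂ) - (u':ℂ))) ^ 2) := by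
      linear_combination (((u:ℂ) - (u':ℂ))^2 + (ε:ℂ)^2) * Complex.I_mul_I
    rw [h2, inv_neg]
  have hnormfac : ∀ u u' k : ℝ,
      ‖(k:ℂ) * Complex.exp (-(((ε:ℂ) + Complex.I * ((u:ℂ) - (u':ℂ))) * k))‖
        = |k| * Real.exp (-ε * k) := by
    intro u u' k
    rw [norm_mul, Complex.norm_real, Real.norm_eq_abs, norm_cexp_ofReal_mul]
    norm_num [Complex.add_re, Complex.mul_re]
  have hwt : IntegrableOn (fun k : ℝ => |k| * Real.exp (-ε * k)) (Set.Ioi 0) := by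
    refine (integrableOn_id_mul_exp hε).congr_fun (fun k hk => ?_) measurableSet_Ioi
    rw [_root_.abs_of_nonneg (le_of_lt hk)]
  simp_rw [hker, mul_neg, integral_neg, ← integral_const_mul]
  have hswap1 : ∀ u : ℝ,
      (∫ u' : ℝ, ∫ k in Set.Ioi (0:ℝ), F u * F u' *
        ((k:ℂ) * Complex.exp (-(((ε:ℂ) + Complex.I * ((u:ℂ) - (u':ℂ))) * k))))
      = ∫ k in Set.Ioi (0:ℝ), ∫ u' : ℝ, F u * F u' *
        ((k:ℂ) * Complex.exp (-(((ε:ℂ) + Complex.I * ((u:ℂ) - (u':ℂ))) * k))) := by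
    intro u
    apply integral_integral_swap
    have hbint : Integrable (fun p : ℝ × ℝ =>
        (‖F u‖ * ‖F p.1‖) * (|p.2| * Real.exp (-ε * p.2)))
        (volume.prod (volume.restrict (Set.Ioi 0))) :=
      Integrable.mul_prod (hFint.norm.const_mul _) hwt
    refine hbint.mono' ?_ ?_
    · apply Continuous.aestronglyMeasurable
      fun_prop
    · refine Eventually.of_forall fun p => ?_
      rw [Function.uncurry]
      rw [norm_mul, norm_mul, hnormfac]
  simp only [hF] at hswap1
  simp_rw [hswap1]
  have hexp : ∀ u u' k : ℝ,
      Complex.exp (-(((ε:ℂ) + Complex.I * ((u:ℂ) - (u':ℂ))) * k))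
        = Complex.exp (-Complex.I * k * u) * Complex.exp (Complex.I * k * u')
            * Complex.exp (-((ε:ℂ) * k)) := by
    intro u u' k
    rw [← Complex.exp_add, ← Complex.exp_add]
    congr 1
    ring
  have hstep3 : ∀ u : ℝ, ∀ k : ℝ,
      (∫ u' : ℝ, F u * F u' *
        ((k:ℂ) * Complex.exp (-(((ε:ℂ) + Complex.I * ((u:ℂ) - (u':ℂ))) * k))))
      = (F u * Complex.exp (-Complex.I * k * u)) *
          ((k:ℂ) * Complex.exp (-((ε:ℂ) * k)) * Cc k) := by
    intro u k
    have h1 : ∀ u' : ℝ, F u * F u' *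
        ((k:ℂ) * Complex.exp (-(((ε:ℂ) + Complex.I * ((u:ℂ) - (u':ℂ))) * k)))
        = (F u * Complex.exp (-Complex.I * k * u) * ((k:ℂ) * Complex.exp (-((ε:ℂ) * k))))
            * (F u' * Complex.exp (Complex.I * k * u')) := by
      intro u'
      rw [hexp u u' k]
      ring
    simp_rw [h1]
    rw [integral_const_mul, ← ft_conj f k]
    ring_nf
    rfl
  simp only [hF] at hstep3
  simp_rw [hstep3]
  have hswap2 :
      (∫ u : ℝ, ∫ k in Set.Ioi (0:ℝ), (F u * Complex.exp (-Complex.I * k * u)) *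
        ((k:ℂ) * Complex.exp (-((ε:ℂ) * k)) * Cc k))
      = ∫ k in Set.Ioi (0:ℝ), ∫ u : ℝ, (F u * Complex.exp (-Complex.I * k * u)) *
        ((k:ℂ) * Complex.exp (-((ε:ℂ) * k)) * Cc k) := by
    apply integral_integral_swap
    have hbint : Integrable (fun p : ℝ × ℝ =>
        ‖F p.1‖ * (|p.2| * Real.exp (-ε * p.2) * M))
        (volume.prod (volume.restrict (Set.Ioi 0))) :=
      Integrable.mul_prod hFint.norm (hwt.mul_const _)
    refine hbint.mono' ?_ ?_
    · apply Continuous.aestronglyMeasurable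
      fun_prop
    · refine Eventually.of_forall fun p => ?_
      rw [Function.uncurry]
      rw [norm_mul, norm_mul, norm_mul, norm_mul]
      have e1 : ‖Complex.exp (-Complex.I * (p.2:ℂ) * (p.1:ℂ))‖ = 1 := by
        rw [Complex.norm_exp]
        norm_num [Complex.mul_re]
      have e2 : ‖Complex.exp (-((ε:ℂ) * (p.2:ℂ)))‖ = Real.exp (-ε * p.2) := by
        rw [norm_cexp_ofReal_mul]
        norm_num
      have e3 : ‖((p.2:ℝ):ℂ)‖ = |p.2| := by
        rw [Complex.norm_real, Real.norm_eq_abs]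
      rw [e1, e2, e3, mul_one]
      have := (hCcnorm p.2).trans_le (hM p.2)
      calc ‖F p.1‖ * (|p.2| * Real.exp (-ε * p.2) * ‖Cc p.2‖)
          ≤ ‖F p.1‖ * (|p.2| * Real.exp (-ε * p.2) * M) := by
            gcongr
      _ = ‖F p.1‖ * (|p.2| * Real.exp (-ε * p.2) * M) := rfl
  rw [hswap2]
  congr 1
  refine integral_congr_ae (Eventually.of_forall fun k => ?_)
  dsimp only
  rw [integral_mul_const]
  have : (∫ u : ℝ, F u * Complex.exp (-Complex.I * k * u)) = ft F k := rfl
  rw [this]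
  have hmc : ft F k * Cc k = ((‖ft F k‖ ^ 2 : ℝ) : ℂ) := by
    rw [hCc, Complex.mul_conj, Complex.normSq_eq_norm_sq]
  calc ft F k * ((k:ℂ) * Complex.exp (-((ε:ℂ) * k)) * Cc k)
      = (k:ℂ) * Complex.exp (-((ε:ℂ) * k)) * (ft F k * Cc k) := by ring
    _ = (k:ℂ) * Complex.exp (-((ε:ℂ) * k)) * ((‖ft F k‖ ^ 2 : ℝ) : ℂ) := by rw [hmc]

end BoundaryTwoPoint

open BoundaryTwoPoint Set

/-- Positivity of the boundary two-point function: for a real-valued Schwartz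
function `f`, the `ε → 0⁺` limit of `−(1/π)∬ f(u)f(u')(u − u' − iε)⁻² du' du`
equals `(1/π)∫₀^∞ k |f̂(k)|² dk`, which is non-negative. -/
theorem boundary_two_point_positivity (f : SchwartzMap ℝ ℝ) :
    Tendsto
      (fun ε : ℝ =>
        -(1 / (Real.pi : ℂ)) *
          ∫ u : ℝ, ∫ u' : ℝ,
            (f u : ℂ) * (f u' : ℂ) * (((u : ℂ) - (u' : ℂ) - ε * Complex.I) ^ 2)⁻¹)
      (nhdsWithin 0 (Set.Ioi 0))
      (nhds (((1 / Real.pi *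
        ∫ k in Set.Ioi (0 : ℝ), k * ‖ft (fun u => (f u : ℂ)) k‖ ^ 2 : ℝ) : ℂ))) ∧
    0 ≤ (1 / Real.pi) * ∫ k in Set.Ioi (0 : ℝ), k * ‖ft (fun u => (f u : ℂ)) k‖ ^ 2 := by
  set F : ℝ → ℂ := fun u => (f u : ℂ) with hF
  set r : ℝ → ℝ := fun k => ‖ft F k‖ ^ 2 with hr
  constructor
  · -- the limit statement
    -- real-valued reduction of the regularized spectral integral
    have hres : ∀ ε : ℝ, (∫ k in Set.Ioi (0:ℝ), (k:ℂ) * Complex.exp (-((ε:ℂ) * k)) *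
        ((r k : ℝ) : ℂ)) = ((∫ k in Set.Ioi (0:ℝ), k * Real.exp (-(ε * k)) * r k : ℝ) : ℂ) := by
      intro ε
      have h0 := integral_ofReal (𝕜 := ℂ) (μ := volume.restrict (Set.Ioi 0))
        (f := fun k => k * Real.exp (-(ε * k)) * r k)
      calc (∫ k in Set.Ioi (0:ℝ), (k:ℂ) * Complex.exp (-((ε:ℂ) * k)) * ((r k : ℝ) : ℂ))
          = ∫ k in Set.Ioi (0:ℝ), ((k * Real.exp (-(ε * k)) * r k : ℝ) : ℂ) := by
            refine integral_congr_ae (Filter.Eventually.of_forall fun k => ?_)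
            push_cast
            ring
        _ = ((∫ k in Set.Ioi (0:ℝ), k * Real.exp (-(ε * k)) * r k : ℝ) : ℂ) := by
            exact h0
    -- dominated convergence for the real integrals
    have hreal : Tendsto (fun ε : ℝ => ∫ k in Set.Ioi (0:ℝ), k * Real.exp (-(ε * k)) * r k)
        (nhdsWithin 0 (Set.Ioi 0)) (nhds (∫ k in Set.Ioi (0:ℝ), k * r k)) := by
      have hbound := ft_sq_integrable f
      apply tendsto_integral_filter_of_dominated_convergence (fun k => k * r k)
      · refine Filter.Eventually.of_forall fun ε => ?_
        apply Continuous.aestronglyMeasurable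
        have : Continuous fun k : ℝ => ft F k := ft_continuous f
        fun_prop
      · filter_upwards [self_mem_nhdsWithin] with ε (hε : (0:ℝ) < ε)
        filter_upwards [ae_restrict_mem measurableSet_Ioi] with k hk
        have hk0 : (0:ℝ) < k := hk
        have hexple : Real.exp (-(ε * k)) ≤ 1 := by
          rw [Real.exp_le_one_iff]
          nlinarith
        rw [Real.norm_eq_abs, _root_.abs_of_nonneg (by positivity)]
        have hrk : 0 ≤ r k := by positivity
        calc k * Real.exp (-(ε * k)) * r k ≤ k * 1 * r k := by gcongr
          _ = k * r k := by ring
      · exact hbound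
      · refine Filter.Eventually.of_forall fun k => ?_
        have hcont : Continuous fun ε : ℝ => k * Real.exp (-(ε * k)) * r k := by fun_prop
        have := (hcont.tendsto 0).mono_left
          (nhdsWithin_le_nhds (s := Set.Ioi (0:ℝ)))
        simpa using this
    -- cast to ℂ and multiply by 1/π
    have h2 : Tendsto (fun ε : ℝ =>
        (((1 / Real.pi) * ∫ k in Set.Ioi (0:ℝ), k * Real.exp (-(ε * k)) * r k : ℝ) : ℂ))
        (nhdsWithin 0 (Set.Ioi 0))
        (nhds (((1 / Real.pi * ∫ k in Set.Ioi (0:ℝ), k * r k : ℝ) : ℂ))) :=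
      (Complex.continuous_ofReal.tendsto _).comp (hreal.const_mul _)
    refine Tendsto.congr' ?_ h2
    filter_upwards [self_mem_nhdsWithin] with ε (hε : (0:ℝ) < ε)
    rw [double_integral_eq f hε, hres ε]
    push_cast
    ring
  · -- non-negativity
    have hnn : 0 ≤ ∫ k in Set.Ioi (0:ℝ), k * r k := by
      apply setIntegral_nonneg measurableSet_Ioi
      intro k hk
      have : (0:ℝ) < k := hk
      positivity
    have hpi : (0:ℝ) ≤ 1 / Real.pi := by positivity
    exact mul_nonneg hpi hnn
end

section
/- Let f, h : ℝ → ℂ be Schwartz functions. Then (1/π) ∫_{0}^{∞} k ( f̂(k) ĥ(−k) − ĥ(k) f̂(−k) ) dk = 2i ∫_ℝ f(u) h'(u) du. -/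
open MeasureTheory Complex Real SchwartzMap
open scoped FourierTransform

lemma ft_eq_fourierIntegral (f : ℝ → ℂ) (k : ℝ) :
    ft f k = 𝓕 f (k / (2 * π)) := by
  rw [Real.fourier_real_eq_integral_exp_smul, ft]
  congr 1
  ext u
  rw [smul_eq_mul, mul_comm]
  congr 1
  congr 1
  have hπ : (π : ℂ) ≠ 0 := by exact_mod_cast Real.pi_ne_zero
  push_cast
  field_simp

/-- The antisymmetric part of the boundary two-point function reproduces the
boundary symplectic form:
`(1/π)∫₀^∞ k (f̂(k)ĥ(−k) − ĥ(k)f̂(−k)) dk = 2i ∫ f(u) h'(u) du`. -/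
theorem boundary_two_point_commutator (f h : SchwartzMap ℝ ℂ) :
    (1 / (Real.pi : ℂ)) *
      ∫ k in Set.Ioi (0 : ℝ),
        (k : ℂ) * (ft (fun u => f u) k * ft (fun u => h u) (-k) -
          ft (fun u => h u) k * ft (fun u => f u) (-k)) =
    2 * Complex.I * ∫ u : ℝ, f u * deriv (fun v : ℝ => h v) u := by
  have hπ : (0:ℝ) < 2 * π := by positivity
  have hπ' : (π : ℂ) ≠ 0 := by exact_mod_cast Real.pi_ne_zero
  set F : ℝ → ℂ := 𝓕 ⇑f with hFdef
  set H : ℝ → ℂ := 𝓕 ⇑h with hHdef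
  have hFs : ⇑(fourierTransformCLM ℝ f) = F := rfl
  have hHs : ⇑(fourierTransformCLM ℝ h) = H := rfl
  have hFc : Continuous F := by rw [← hFs]; exact (fourierTransformCLM ℝ f).continuous
  have hHc : Continuous H := by rw [← hHs]; exact (fourierTransformCLM ℝ h).continuous
  -- integrability of the two pieces
  have hbound : ∀ ξ : ℝ, ‖H ξ‖ ≤ (SchwartzMap.seminorm ℝ 0 0) (fourierTransformCLM ℝ h) := by
    intro ξ
    rw [← hHs]
    exact SchwartzMap.norm_le_seminorm ℝ _ _
  have hbound' : ∀ ξ : ℝ, ‖F ξ‖ ≤ (SchwartzMap.seminorm ℝ 0 0) (fourierTransformCLM ℝ f) := by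
    intro ξ
    rw [← hFs]
    exact SchwartzMap.norm_le_seminorm ℝ _ _
  have hA : Integrable (fun ξ : ℝ => (ξ:ℂ) * (F ξ * H (-ξ))) := by
    refine Integrable.mono'
      (((fourierTransformCLM ℝ f).integrable_pow_mul volume 1).const_mul
        ((SchwartzMap.seminorm ℝ 0 0) (fourierTransformCLM ℝ h)))
      ?_ ?_
    · exact (Complex.continuous_ofReal.mul
        (hFc.mul (hHc.comp continuous_neg))).aestronglyMeasurable
    · filter_upwards with ξ
      rw [hFs]
      calc ‖(ξ:ℂ) * (F ξ * H (-ξ))‖ = |ξ| * (‖F ξ‖ * ‖H (-ξ)‖) := by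
            simp [norm_mul, Complex.norm_real, Real.norm_eq_abs]
        _ ≤ |ξ| * (‖F ξ‖ * (SchwartzMap.seminorm ℝ 0 0) (fourierTransformCLM ℝ h)) :=
            mul_le_mul_of_nonneg_left
              (mul_le_mul_of_nonneg_left (hbound _) (norm_nonneg _)) (abs_nonneg _)
        _ = (SchwartzMap.seminorm ℝ 0 0) (fourierTransformCLM ℝ h) * (‖ξ‖ ^ 1 * ‖F ξ‖) := by
            simp [Real.norm_eq_abs]; ring
  have hB : Integrable (fun ξ : ℝ => (ξ:ℂ) * (H ξ * F (-ξ))) := by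
    refine Integrable.mono'
      (((fourierTransformCLM ℝ h).integrable_pow_mul volume 1).const_mul
        ((SchwartzMap.seminorm ℝ 0 0) (fourierTransformCLM ℝ f)))
      ?_ ?_
    · exact (Complex.continuous_ofReal.mul
        (hHc.mul (hFc.comp continuous_neg))).aestronglyMeasurable
    · filter_upwards with ξ
      rw [hHs]
      calc ‖(ξ:ℂ) * (H ξ * F (-ξ))‖ = |ξ| * (‖H ξ‖ * ‖F (-ξ)‖) := by
            simp [norm_mul, Complex.norm_real, Real.norm_eq_abs]
        _ ≤ |ξ| * (‖H ξ‖ * (SchwartzMap.seminorm ℝ 0 0) (fourierTransformCLM ℝ f)) :=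
            mul_le_mul_of_nonneg_left
              (mul_le_mul_of_nonneg_left (hbound' _) (norm_nonneg _)) (abs_nonneg _)
        _ = (SchwartzMap.seminorm ℝ 0 0) (fourierTransformCLM ℝ f) * (‖ξ‖ ^ 1 * ‖H ξ‖) := by
            simp [Real.norm_eq_abs]; ring
  -- step 1: rewrite `ft` in terms of `𝓕` and change variables `k = 2πξ`
  have step1 : (∫ k in Set.Ioi (0 : ℝ),
        (k : ℂ) * (ft (fun u => f u) k * ft (fun u => h u) (-k) -
          ft (fun u => h u) k * ft (fun u => f u) (-k)))
      = (2*π:ℝ) • ∫ ξ in Set.Ioi (0:ℝ),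
          (((2*π*ξ:ℝ)):ℂ) * (F ξ * H (-ξ) - H ξ * F (-ξ)) := by
    have h1 : ∀ k : ℝ, (k : ℂ) * (ft (fun u => f u) k * ft (fun u => h u) (-k) -
          ft (fun u => h u) k * ft (fun u => f u) (-k))
        = (fun ξ : ℝ => (((2*π*ξ:ℝ)):ℂ) * (F ξ * H (-ξ) - H ξ * F (-ξ))) ((2*π)⁻¹ * k) := by
      intro k
      have e1 : 2*π*((2*π)⁻¹*k) = k := by field_simp
      have e2 : (-k) / (2*π) = -((2*π)⁻¹*k) := by ring
      have e3 : k / (2*π) = (2*π)⁻¹*k := by ring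
      simp only [ft_eq_fourierIntegral, e1, e2, e3, hFdef, hHdef]
    simp_rw [h1]
    have hcv := integral_comp_mul_left_Ioi
      (fun ξ : ℝ => (((2*π*ξ:ℝ)):ℂ) * (F ξ * H (-ξ) - H ξ * F (-ξ))) 0
      (by positivity : (0:ℝ) < (2*π)⁻¹)
    simp only [mul_zero, inv_inv] at hcv
    exact hcv
  -- step 2: combine the two halves into an integral over all of ℝ
  have step2 : (∫ ξ in Set.Ioi (0:ℝ), ((ξ:ℝ):ℂ) * (F ξ * H (-ξ) - H ξ * F (-ξ)))
      = ∫ ξ : ℝ, (ξ:ℂ) * (F ξ * H (-ξ)) := by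
    have hsub : (∫ ξ in Set.Ioi (0:ℝ), ((ξ:ℝ):ℂ) * (F ξ * H (-ξ) - H ξ * F (-ξ)))
        = (∫ ξ in Set.Ioi (0:ℝ), (ξ:ℂ) * (F ξ * H (-ξ)))
          - ∫ ξ in Set.Ioi (0:ℝ), (ξ:ℂ) * (H ξ * F (-ξ)) := by
      rw [← integral_sub hA.integrableOn hB.integrableOn]
      congr 1; ext ξ; ring
    have hneg : (∫ ξ in Set.Ioi (0:ℝ), (ξ:ℂ) * (H ξ * F (-ξ)))
        = - ∫ ξ in Set.Iic (0:ℝ), (ξ:ℂ) * (F ξ * H (-ξ)) := by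
      have hn := integral_comp_neg_Ioi (0:ℝ) (fun ξ : ℝ => (ξ:ℂ) * (F ξ * H (-ξ)))
      simp only [neg_zero] at hn
      rw [← hn, ← integral_neg]
      refine setIntegral_congr_fun measurableSet_Ioi fun ξ _ => ?_
      simp only [neg_neg]
      push_cast
      ring
    rw [hsub, hneg, sub_neg_eq_add, add_comm,
      intervalIntegral.integral_Iic_add_Ioi hA.integrableOn hA.integrableOn]
  -- derivative facts
  have hd : ⇑(derivCLM ℝ ℂ h) = deriv ⇑h := funext fun x => derivCLM_apply ℝ h x
  have hd_int : Integrable (deriv ⇑h) := by rw [← hd]; exact (derivCLM ℝ ℂ h).integrable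
  have hFd_int : Integrable (𝓕 (deriv ⇑h)) := by
    have : ⇑(fourierTransformCLM ℝ (derivCLM ℝ ℂ h)) = 𝓕 (deriv ⇑h) := by
      rw [fourierTransformCLM_apply, SchwartzMap.fourier_coe, hd]
    rw [← this]; exact (fourierTransformCLM ℝ (derivCLM ℝ ℂ h)).integrable
  have hderiv : 𝓕 (deriv ⇑h) = fun ξ : ℝ => (2 * π * Complex.I * ξ) • (H ξ) :=
    Real.fourier_deriv h.integrable h.differentiable hd_int
  -- the inverse transform of h'
  set G : ℝ → ℂ := 𝓕⁻ (deriv ⇑h) with hGdef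
  have hGint : Integrable G := by
    have : ⇑((FourierTransform.fourierCLE ℝ (SchwartzMap ℝ ℂ)).symm (derivCLM ℝ ℂ h)) = G := by
      rw [FourierTransform.fourierCLE_symm_apply, SchwartzMap.fourierInv_coe, hd]
    rw [← this]; exact ((FourierTransform.fourierCLE ℝ (SchwartzMap ℝ ℂ)).symm (derivCLM ℝ ℂ h)).integrable
  have hGF : 𝓕 G = deriv ⇑h :=
    Continuous.fourier_fourierInv_eq (hd.symm ▸ (derivCLM ℝ ℂ h).continuous) hd_int hFd_int
  -- pointwise identity: ξ • H(−ξ) = −(2πI)⁻¹ G ξ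
  have hpt : ∀ ξ : ℝ, (ξ:ℂ) * (F ξ * H (-ξ))
      = (-(2 * (π:ℂ) * Complex.I))⁻¹ * (F ξ * G ξ) := by
    intro ξ
    have : G ξ = -(2 * (π:ℂ) * Complex.I * ξ) * H (-ξ) := by
      rw [hGdef, fourierInv_eq_fourier_neg, hderiv]
      push_cast
      simp [smul_eq_mul]
    rw [this]
    have h2πI : (2 * (π:ℂ) * Complex.I) ≠ 0 := by
      simp [hπ', Complex.I_ne_zero]
    field_simp
  -- step 3: Parseval-type identity
  have step3 : (∫ ξ : ℝ, F ξ * G ξ) = ∫ u : ℝ, f u * deriv ⇑h u := by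
    have hflip : (innerₗ ℝ).flip = innerₗ ℝ := by
      apply LinearMap.ext; intro x; apply LinearMap.ext; intro y
      exact real_inner_comm x y
    have := VectorFourier.integral_fourierIntegral_smul_eq_flip (L := innerₗ ℝ) (μ := volume) (ν := volume)
      Real.continuous_fourierChar continuous_inner f.integrable hGint
    rw [hflip] at this
    have e1 : (∫ ξ : ℝ, F ξ * G ξ)
        = ∫ ξ : ℝ, (VectorFourier.fourierIntegral 𝐞 volume (innerₗ ℝ) ⇑f ξ) • G ξ := by
      congr 1
    rw [e1, this]
    have e2 : (fun x : ℝ => VectorFourier.fourierIntegral 𝐞 volume (innerₗ ℝ) G x)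
        = 𝓕 G := rfl
    simp only [smul_eq_mul]
    congr 1
    ext x
    change f x * (VectorFourier.fourierIntegral 𝐞 volume (innerₗ ℝ) G x) = _
    rw [show (VectorFourier.fourierIntegral 𝐞 volume (innerₗ ℝ) G x) = 𝓕 G x from rfl, hGF]
  -- put everything together
  rw [step1]
  have pull : (∫ ξ in Set.Ioi (0:ℝ), (((2*π*ξ:ℝ)):ℂ) * (F ξ * H (-ξ) - H ξ * F (-ξ)))
      = (2*(π:ℂ)) * ∫ ξ in Set.Ioi (0:ℝ), ((ξ:ℝ):ℂ) * (F ξ * H (-ξ) - H ξ * F (-ξ)) := by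
    rw [← integral_const_mul]
    congr 1; ext ξ; push_cast; ring
  rw [pull, step2]
  have : (∫ ξ : ℝ, (ξ:ℂ) * (F ξ * H (-ξ)))
      = (-(2 * (π:ℂ) * Complex.I))⁻¹ * ∫ ξ : ℝ, F ξ * G ξ := by
    rw [← integral_const_mul]
    congr 1; ext ξ; exact hpt ξ
  rw [this, step3]
  have hd' : deriv (fun v : ℝ => h v) = deriv ⇑h := rfl
  rw [hd']
  rw [Complex.real_smul]
  push_cast
  have h2πI : (2 * (π:ℂ) * Complex.I) ≠ 0 := by
    simp [hπ', Complex.I_ne_zero]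
  field_simp
  ring_nf
  simp [Complex.I_sq]
end

section
/- Let g : ℝ → ℂ be continuous with k ↦ (1 + |k|)·g(k) (absolutely) integrable on ℝ. Then lim_{T→0⁺} ∫_{ℝ∖{0}} (k/(1 − e^{−k/T})) g(k) dk = ∫_{0}^{∞} k g(k) dk. -/
open MeasureTheory Complex Filter

lemma bose_abs_le {T : ℝ} (hT : 0 < T) (hT1 : T ≤ 1) (k : ℝ) :
    |k / (1 - Real.exp (-k / T))| ≤ 1 + |k| := by
  rcases lt_trichotomy k 0 with hk | hk | hk
  · -- k < 0
    have hx : 0 < -k / T := div_pos (by linarith) hT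
    have he : 1 < Real.exp (-k / T) := by
      calc (1:ℝ) = Real.exp 0 := Real.exp_zero.symm
        _ < Real.exp (-k / T) := Real.exp_lt_exp.mpr hx
    have h1 : -k / T ≤ Real.exp (-k / T) - 1 := by
      have := Real.add_one_le_exp (-k / T); linarith
    have hf : k / (1 - Real.exp (-k / T)) = (-k) / (Real.exp (-k / T) - 1) := by
      rw [div_eq_div_iff (by linarith) (by linarith)]; ring
    rw [hf, _root_.abs_of_nonneg (div_nonneg (by linarith) (by linarith))]
    have h2 : (-k) / (Real.exp (-k / T) - 1) ≤ (-k) / (-k / T) := by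
      gcongr
      · linarith
    have h3 : (-k) / (-k / T) = T := by
      field_simp
      exact div_self hk.ne
    calc (-k) / (Real.exp (-k / T) - 1) ≤ T := h2.trans_eq h3
      _ ≤ 1 + |k| := by have := abs_nonneg k; linarith
  · simp [hk]
  · -- k > 0
    have hx : 0 < k / T := div_pos hk hT
    have he : Real.exp (-k / T) < 1 := by
      calc Real.exp (-k / T) < Real.exp 0 :=
        Real.exp_lt_exp.mpr (by rw [neg_div]; linarith)
        _ = 1 := Real.exp_zero
    have hd : 0 < 1 - Real.exp (-k / T) := by linarith
    have key : (k + T) * Real.exp (-k / T) ≤ T := by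
      have h1 : 1 + k / T ≤ Real.exp (k / T) := (by linarith [Real.add_one_le_exp (k / T)])
      have h2 : (1 + k / T) * Real.exp (-(k / T)) ≤ 1 := by
        have hep : 0 < Real.exp (-(k / T)) := Real.exp_pos _
        calc (1 + k / T) * Real.exp (-(k / T))
            ≤ Real.exp (k / T) * Real.exp (-(k / T)) := by
              apply mul_le_mul_of_nonneg_right h1 hep.le
          _ = 1 := by rw [← Real.exp_add]; simp
      have h3 : k + T = T * (1 + k / T) := by field_simp; ring
      rw [h3, neg_div] at *
      calc T * (1 + k / T) * Real.exp (-(k / T))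
          = T * ((1 + k / T) * Real.exp (-(k / T))) := by ring
        _ ≤ T * 1 := mul_le_mul_of_nonneg_left h2 hT.le
        _ = T := mul_one T
    have hle : k / (1 - Real.exp (-k / T)) ≤ k + T := by
      rw [div_le_iff₀ hd]
      have : (k + T) * (1 - Real.exp (-k / T)) = (k + T) - (k + T) * Real.exp (-k / T) := by ring
      rw [this]; linarith
    rw [_root_.abs_of_nonneg (div_nonneg hk.le hd.le), abs_of_pos hk]
    linarith

lemma bose_tendsto {k : ℝ} (hk : k ≠ 0) :
    Tendsto (fun T : ℝ => k / (1 - Real.exp (-k / T))) (nhdsWithin 0 (Set.Ioi 0))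
      (nhds (max k 0)) := by
  have hinv : Tendsto (fun T : ℝ => T⁻¹) (nhdsWithin 0 (Set.Ioi 0)) atTop :=
    tendsto_inv_nhdsGT_zero
  rcases hk.lt_or_gt with hk | hk
  · -- k < 0 : limit 0
    have h1 : Tendsto (fun T : ℝ => -k / T) (nhdsWithin 0 (Set.Ioi 0)) atTop := by
      have : (fun T : ℝ => -k / T) = fun T : ℝ => -k * T⁻¹ :=
        funext fun T => div_eq_mul_inv _ _
      rw [this]
      exact hinv.const_mul_atTop (by linarith)
    have h2 : Tendsto (fun T : ℝ => Real.exp (-k / T)) (nhdsWithin 0 (Set.Ioi 0)) atTop :=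
      Real.tendsto_exp_atTop.comp h1
    have h3 : Tendsto (fun T : ℝ => Real.exp (-k / T) - 1) (nhdsWithin 0 (Set.Ioi 0)) atTop :=
      tendsto_atTop_add_const_right _ (-1) h2
    have h4 : Tendsto (fun T : ℝ => (-k) / (Real.exp (-k / T) - 1))
        (nhdsWithin 0 (Set.Ioi 0)) (nhds 0) :=
      Tendsto.div_atTop tendsto_const_nhds h3
    have heq : (fun T : ℝ => k / (1 - Real.exp (-k / T)))
        =ᶠ[nhdsWithin 0 (Set.Ioi 0)] fun T : ℝ => (-k) / (Real.exp (-k / T) - 1) := by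
      filter_upwards [self_mem_nhdsWithin] with T hT
      have hTpos : (0:ℝ) < T := hT
      have he : 1 < Real.exp (-k / T) := by
        calc (1:ℝ) = Real.exp 0 := Real.exp_zero.symm
          _ < Real.exp (-k / T) := Real.exp_lt_exp.mpr (div_pos (by linarith) hTpos)
      rw [div_eq_div_iff (by linarith) (by linarith)]; ring
    rw [max_eq_right hk.le]
    exact Tendsto.congr' heq.symm h4
  · -- k > 0 : limit k
    have h1 : Tendsto (fun T : ℝ => -k / T) (nhdsWithin 0 (Set.Ioi 0)) atBot := by
      have : (fun T : ℝ => -k / T) = fun T : ℝ => -(k * T⁻¹) :=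
        funext fun T => by rw [neg_div, div_eq_mul_inv]
      rw [this]
      exact tendsto_neg_atTop_atBot.comp (hinv.const_mul_atTop hk)
    have h2 : Tendsto (fun T : ℝ => Real.exp (-k / T)) (nhdsWithin 0 (Set.Ioi 0)) (nhds 0) :=
      Real.tendsto_exp_atBot.comp h1
    have h3 : Tendsto (fun T : ℝ => 1 - Real.exp (-k / T)) (nhdsWithin 0 (Set.Ioi 0))
        (nhds 1) := by
      have := (tendsto_const_nhds (x := (1:ℝ))).sub h2
      simpa using this
    have h4 := (tendsto_const_nhds (x := k) (f := nhdsWithin (0:ℝ) (Set.Ioi 0))).div h3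
      one_ne_zero
    rw [div_one] at h4
    convert h4 using 2
    simp [max_eq_left hk.le]
    exact max_eq_left hk.le

/-- Weak convergence of the thermal (Bose) densities to the vacuum density as
the temperature tends to zero: for continuous `g : ℝ → ℂ` with
`(1 + |k|)·g(k)` absolutely integrable,
`∫_{ℝ∖{0}} (k/(1 − e^{−k/T})) g(k) dk → ∫₀^∞ k g(k) dk` as `T → 0⁺`. -/
theorem bose_factor_zero_temperature_limit (g : ℝ → ℂ) (hg : Continuous g)
    (hint : Integrable (fun k : ℝ => (1 + |k|) * ‖g k‖)) :
    Tendsto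
      (fun T : ℝ => ∫ k in {(0 : ℝ)}ᶜ, ((k / (1 - Real.exp (-k / T)) : ℝ) : ℂ) * g k)
      (nhdsWithin 0 (Set.Ioi 0))
      (nhds (∫ k in Set.Ioi (0 : ℝ), (k : ℂ) * g k)) := by
  set μ := (volume : Measure ℝ).restrict {(0:ℝ)}ᶜ
  have hμint : Integrable (fun k : ℝ => (1 + |k|) * ‖g k‖) μ := hint.restrict
  have key : Tendsto
      (fun T : ℝ => ∫ k in {(0 : ℝ)}ᶜ, ((k / (1 - Real.exp (-k / T)) : ℝ) : ℂ) * g k)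
      (nhdsWithin 0 (Set.Ioi 0))
      (nhds (∫ k in {(0:ℝ)}ᶜ, ((max k 0 : ℝ) : ℂ) * g k)) := by
    apply tendsto_integral_filter_of_dominated_convergence
      (fun k : ℝ => (1 + |k|) * ‖g k‖)
    · filter_upwards with T
      apply AEStronglyMeasurable.mul _ hg.aestronglyMeasurable.restrict
      apply Measurable.aestronglyMeasurable
      exact Complex.measurable_ofReal.comp
        (measurable_id.div ((measurable_const.sub
          ((measurable_id.neg.div_const T).exp))))
    · filter_upwards [Ioc_mem_nhdsGT (show (0:ℝ) < 1 by norm_num)] with T hT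
      filter_upwards with k
      rw [norm_mul, Complex.norm_real, Real.norm_eq_abs]
      exact mul_le_mul_of_nonneg_right (bose_abs_le hT.1 hT.2 k) (norm_nonneg _)
    · exact hμint
    · filter_upwards [ae_restrict_mem (measurableSet_singleton (0:ℝ)).compl] with k hk
      exact ((Complex.continuous_ofReal.tendsto _).comp (bose_tendsto hk)).mul_const (g k)
  convert key using 2
  have h1 : (∫ k in {(0:ℝ)}ᶜ, ((max k 0 : ℝ) : ℂ) * g k)
      = ∫ k : ℝ, ((max k 0 : ℝ) : ℂ) * g k := by
    apply setIntegral_eq_integral_of_ae_compl_eq_zero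
    filter_upwards with x hx
    have : x = 0 := by simpa using hx
    simp [this]
  have h2 : (∫ k : ℝ, ((max k 0 : ℝ) : ℂ) * g k)
      = ∫ k in Set.Ioi (0:ℝ), ((max k 0 : ℝ) : ℂ) * g k := by
    refine (setIntegral_eq_integral_of_forall_compl_eq_zero fun x hx => ?_).symm
    have : max x 0 = 0 := max_eq_right (by simpa using hx)
    simp [this]
  have h3 : (∫ k in Set.Ioi (0:ℝ), ((max k 0 : ℝ) : ℂ) * g k)
      = ∫ k in Set.Ioi (0:ℝ), (k : ℂ) * g k := by
    apply setIntegral_congr_fun measurableSet_Ioi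
    intro x hx
    simp only []
    rw [max_eq_left (le_of_lt hx)]
  rw [h1, h2, h3]
end
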